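/- arXiv:2307.04079 — 10 statements merged into one kernel-verified Lean document; each statement's English description precedes it below -/
import Mathlib

section
/- In a projective rectangle, if l is a line and p is a point not on l, then the number of lines through p that meet l equals the number of points on l. -/
/-- A projective rectangle: an incidence structure satisfying axioms (A1)-(A6). -/
structure ProjRect (Point Line : Type) where
  Incid : Point → Line → Prop
  /-- (A4) the special point. -/
  D : Point
  /-- (A1) every two distinct points lie on exactly one line. -/
  A1 : ∀ p q : Point, p ≠ q → ∃! l : Line, Incid p l ∧ Incid q l
  /-- (A2) there exist four points with no three collinear. -/
  A2 : ∃ a b c d : Point, a ≠ b ∧ a ≠ c ∧ a ≠ d ∧ b ≠ c ∧ b ≠ d ∧ c ≠ d ∧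
    (∀ l : Line, ¬(Incid a l ∧ Incid b l ∧ Incid c l)) ∧
    (∀ l : Line, ¬(Incid a l ∧ Incid b l ∧ Incid d l)) ∧
    (∀ l : Line, ¬(Incid a l ∧ Incid c l ∧ Incid d l)) ∧
    (∀ l : Line, ¬(Incid b l ∧ Incid c l ∧ Incid d l))
  /-- (A3) every line has at least three points. -/
  A3 : ∀ l : Line, ∃ p q r : Point, p ≠ q ∧ p ≠ r ∧ q ≠ r ∧
    Incid p l ∧ Incid q l ∧ Incid r l
  /-- (A5) each special line intersects every other line in exactly one point. -/
  A5 : ∀ s l : Line, Incid D s → l ≠ s → ∃! p : Point, Incid p s ∧ Incid p l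
  /-- (A6) restricted Pasch axiom. -/
  A6 : ∀ l1 l2 l3 l4 : Line, ∀ p p13 p14 p23 p24 : Point,
    ¬Incid D l1 → ¬Incid D l2 → l1 ≠ l2 → Incid p l1 → Incid p l2 → l3 ≠ l4 →
    Incid p13 l1 → Incid p13 l3 → Incid p14 l1 → Incid p14 l4 →
    Incid p23 l2 → Incid p23 l3 → Incid p24 l2 → Incid p24 l4 →
    p13 ≠ p14 → p13 ≠ p23 → p13 ≠ p24 → p14 ≠ p23 → p14 ≠ p24 → p23 ≠ p24 →
    ∃ q : Point, Incid q l3 ∧ Incid q l4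

/-- If l is a line and p a point not on l, the lines through p meeting l are in
bijection with the points of l. -/
theorem stmt_2 {Point Line : Type} (R : ProjRect Point Line) (l : Line) (p : Point)
    (hp : ¬R.Incid p l) :
    Nonempty ({l' : Line // R.Incid p l' ∧ ∃ q, R.Incid q l' ∧ R.Incid q l} ≃
      {q : Point // R.Incid q l}) := by
  classical
  -- two lines through two distinct points coincide
  have uniq : ∀ (a b : Point) (m n : Line), a ≠ b → R.Incid a m → R.Incid b m →
      R.Incid a n → R.Incid b n → m = n := by
    intro a b m n hab ham hbm han hbn
    obtain ⟨o, -, ho⟩ := R.A1 a b hab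
    exact (ho m ⟨ham, hbm⟩).trans (ho n ⟨han, hbn⟩).symm
  have key : ∀ l' : {l' : Line // R.Incid p l' ∧ ∃ q, R.Incid q l' ∧ R.Incid q l},
      ∃! q : Point, R.Incid q l'.1 ∧ R.Incid q l := by
    rintro ⟨l', hpl', q, hq1, hq2⟩
    refine ⟨q, ⟨hq1, hq2⟩, ?_⟩
    rintro q' ⟨hq1', hq2'⟩
    by_contra hne
    have : l' = l := uniq q' q l' l hne hq1' hq1 hq2' hq2
    exact hp (this ▸ hpl')
  refine ⟨{ toFun := fun l' => ⟨(key l').choose, (key l').choose_spec.1.2⟩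
            invFun := fun q => ?_
            left_inv := ?_, right_inv := ?_ }⟩
  · have hpq : p ≠ q.1 := fun h => hp (h ▸ q.2)
    refine ⟨(R.A1 p q.1 hpq).choose, (R.A1 p q.1 hpq).choose_spec.1.1,
      q.1, (R.A1 p q.1 hpq).choose_spec.1.2, q.2⟩
  · rintro ⟨l', hpl', hex⟩
    have hq := (key ⟨l', hpl', hex⟩).choose_spec.1
    set q := (key ⟨l', hpl', hex⟩).choose
    have hpq : p ≠ q := fun h => hp (h ▸ hq.2)
    apply Subtype.ext
    exact uniq p q _ l' hpq (R.A1 p q hpq).choose_spec.1.1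
      (R.A1 p q hpq).choose_spec.1.2 hpl' hq.1
  · rintro ⟨q, hq⟩
    have hpq : p ≠ q := fun h => hp (h ▸ hq)
    set m := (R.A1 p q hpq).choose with hm
    have hms := (R.A1 p q hpq).choose_spec.1
    have hmem : R.Incid p m ∧ ∃ q', R.Incid q' m ∧ R.Incid q' l := ⟨hms.1, q, hms.2, hq⟩
    apply Subtype.ext
    show (key ⟨m, hmem⟩).choose = q
    exact ((key ⟨m, hmem⟩).choose_spec.2 q ⟨hms.2, hq⟩).symm
end

section
/- In a projective rectangle, all ordinary lines have the same number of points, and this number equals the number of special lines. -/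
/-- Every ordinary line has as many points as there are special lines; in particular
all ordinary lines have the same number of points. -/
theorem stmt_3 {Point Line : Type} (R : ProjRect Point Line) (l : Line)
    (hl : ¬R.Incid R.D l) :
    Nonempty ({p : Point // R.Incid p l} ≃ {s : Line // R.Incid R.D s}) := by
  classical
  have hne : ∀ p : Point, R.Incid p l → p ≠ R.D := fun p hp h => hl (h ▸ hp)
  have hls : ∀ s : Line, R.Incid R.D s → l ≠ s := fun s hs h => hl (h ▸ hs)
  let F : {p : Point // R.Incid p l} → {s : Line // R.Incid R.D s} :=
    fun p => ⟨(R.A1 p.1 R.D (hne p.1 p.2)).choose,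
      (R.A1 p.1 R.D (hne p.1 p.2)).choose_spec.1.2⟩
  let G : {s : Line // R.Incid R.D s} → {p : Point // R.Incid p l} :=
    fun s => ⟨(R.A5 s.1 l s.2 (hls s.1 s.2)).choose,
      (R.A5 s.1 l s.2 (hls s.1 s.2)).choose_spec.1.2⟩
  refine ⟨⟨F, G, ?_, ?_⟩⟩
  · intro p
    apply Subtype.ext
    have h5 := (R.A5 (F p).1 l (F p).2 (hls _ (F p).2)).choose_spec
    have hp : R.Incid p.1 (F p).1 := (R.A1 p.1 R.D (hne p.1 p.2)).choose_spec.1.1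
    exact (h5.2 p.1 ⟨hp, p.2⟩).symm
  · intro s
    apply Subtype.ext
    have h1 := (R.A1 (G s).1 R.D (hne (G s).1 (G s).2)).choose_spec
    have hgs : R.Incid (G s).1 s.1 := (R.A5 s.1 l s.2 (hls s.1 s.2)).choose_spec.1.1
    exact (h1.2 s.1 ⟨hgs, s.2⟩).symm
end

section
/- In a projective rectangle, all special lines have the same number of points. -/
namespace PRaux

variable {Point Line : Type} (R : ProjRect Point Line)

/-- Uniqueness of the line through two distinct points. -/
lemma line_unique {p q : Point} (h : p ≠ q) {l m : Line}
    (hpl : R.Incid p l) (hql : R.Incid q l) (hpm : R.Incid p m) (hqm : R.Incid q m) :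
    l = m := by
  obtain ⟨u, _, hu⟩ := R.A1 p q h
  rw [hu l ⟨hpl, hql⟩, hu m ⟨hpm, hqm⟩]

/-- Two distinct special lines meet only at D. -/
lemma special_inter {u v : Line} (hu : R.Incid R.D u) (hv : R.Incid R.D v)
    (huv : u ≠ v) {p : Point} (hpu : R.Incid p u) (hpv : R.Incid p v) : p = R.D := by
  by_contra hpD
  exact huv (line_unique R hpD hpu hu hpv hv)

/-- The projection relation through an external point `z`. -/
def Rel (z x y : Point) : Prop :=
  (x = R.D ∧ y = R.D) ∨
  (x ≠ R.D ∧ y ≠ R.D ∧ ∃ l : Line, R.Incid z l ∧ R.Incid x l ∧ R.Incid y l)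

lemma Rel.symm {z x y : Point} (h : Rel R z x y) : Rel R z y x := by
  rcases h with ⟨h1, h2⟩ | ⟨h1, h2, l, hl1, hl2, hl3⟩
  · exact Or.inl ⟨h2, h1⟩
  · exact Or.inr ⟨h2, h1, l, hl1, hl3, hl2⟩

lemma Rel.exi {u v : Line} (hu : R.Incid R.D u) (hv : R.Incid R.D v) (huv : u ≠ v)
    {z : Point} (hzu : ¬R.Incid z u) (hzv : ¬R.Incid z v)
    {x : Point} (hx : R.Incid x u) : ∃ y : Point, R.Incid y v ∧ Rel R z x y := by
  by_cases hxD : x = R.D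
  · exact ⟨R.D, hv, Or.inl ⟨hxD, rfl⟩⟩
  · have hxz : x ≠ z := fun h => hzu (h ▸ hx)
    obtain ⟨l, ⟨hxl, hzl⟩, -⟩ := R.A1 x z hxz
    have hlv : l ≠ v := fun h => hzv (h ▸ hzl)
    obtain ⟨q, ⟨hqv, hql⟩, -⟩ := R.A5 v l hv hlv
    have hqD : q ≠ R.D := by
      intro h
      subst h
      exact hzu (line_unique R hxD hxl hql hx hu ▸ hzl)
    exact ⟨q, hqv, Or.inr ⟨hxD, hqD, l, hzl, hxl, hql⟩⟩

lemma Rel.uniq {u v : Line} (hu : R.Incid R.D u) (hv : R.Incid R.D v) (huv : u ≠ v)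
    {z : Point} (hzu : ¬R.Incid z u) (hzv : ¬R.Incid z v)
    {x y y' : Point} (hx : R.Incid x u) (hy : R.Incid y v) (hy' : R.Incid y' v)
    (h1 : Rel R z x y) (h2 : Rel R z x y') : y = y' := by
  rcases h1 with ⟨hxD, hyD⟩ | ⟨hxD, hyD, l, hzl, hxl, hyl⟩
  · rcases h2 with ⟨-, hyD'⟩ | ⟨hxD', -⟩
    · rw [hyD, hyD']
    · exact absurd hxD hxD'
  · rcases h2 with ⟨hxD', -⟩ | ⟨-, hyD', l', hzl', hxl', hyl'⟩
    · exact absurd hxD' hxD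
    · have hxz : x ≠ z := fun h => hzu (h ▸ hx)
      have hll' : l = l' := line_unique R hxz hxl hzl hxl' hzl'
      subst hll'
      have hlv : l ≠ v := fun h => hzv (h ▸ hzl)
      obtain ⟨q, -, hq⟩ := R.A5 v l hv hlv
      rw [hq y ⟨hy, hyl⟩, hq y' ⟨hy', hyl'⟩]

/-- There exists a point off two given distinct special lines. -/
lemma exists_off {u v : Line} (hu : R.Incid R.D u) (hv : R.Incid R.D v) (huv : u ≠ v) :
    ∃ z : Point, ¬R.Incid z u ∧ ¬R.Incid z v := by
  obtain ⟨p1, p2, p3, h12, h13, h23, hp1, hp2, hp3⟩ := R.A3 u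
  -- pick x on u with x ≠ D
  have hx : ∃ x : Point, R.Incid x u ∧ x ≠ R.D := by
    by_cases h1 : p1 = R.D
    · exact ⟨p2, hp2, fun h => h12 (h1 ▸ h ▸ rfl)⟩
    · exact ⟨p1, hp1, h1⟩
  obtain ⟨x, hxu, hxD⟩ := hx
  obtain ⟨q1, q2, q3, g12, g13, g23, hq1, hq2, hq3⟩ := R.A3 v
  have hy : ∃ y : Point, R.Incid y v ∧ y ≠ R.D := by
    by_cases h1 : q1 = R.D
    · exact ⟨q2, hq2, fun h => g12 (h1 ▸ h ▸ rfl)⟩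
    · exact ⟨q1, hq1, h1⟩
  obtain ⟨y, hyv, hyD⟩ := hy
  have hxv : ¬R.Incid x v := fun h => hxD (special_inter R hu hv huv hxu h)
  have hyu : ¬R.Incid y u := fun h => hyD (special_inter R hv hu (Ne.symm huv) hyv h)
  have hxy : x ≠ y := fun h => hxv (h ▸ hyv)
  obtain ⟨l, ⟨hxl, hyl⟩, -⟩ := R.A1 x y hxy
  have hlu : l ≠ u := fun h => hyu (h ▸ hyl)
  have hlv : l ≠ v := fun h => hxv (h ▸ hxl)
  obtain ⟨r1, r2, r3, k12, k13, k23, hr1, hr2, hr3⟩ := R.A3 l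
  -- among r1 r2 r3, one differs from both x and y
  have key : ∀ r : Point, R.Incid r l → r ≠ x → r ≠ y → ¬R.Incid r u ∧ ¬R.Incid r v := by
    intro r hrl hrx hry
    constructor
    · intro hru
      exact hlu (line_unique R hrx hrl hxl hru hxu)
    · intro hrv
      exact hlv (line_unique R hry hrl hyl hrv hyv)
  by_cases e1 : r1 = x
  · by_cases e2 : r2 = y
    · exact ⟨r3, key r3 hr3 (fun h => k13 (e1.trans h.symm)) (fun h => k23 (e2.trans h.symm))⟩
    · by_cases e2' : r2 = x
      · exact absurd (e1.trans e2'.symm) k12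
      · exact ⟨r2, key r2 hr2 e2' e2⟩
  · by_cases e1' : r1 = y
    · by_cases e2 : r2 = x
      · exact ⟨r3, key r3 hr3 (fun h => k23 (e2.trans h.symm)) (fun h => k13 (e1'.trans h.symm))⟩
      · by_cases e2' : r2 = y
        · exact absurd (e1'.trans e2'.symm) k12
        · exact ⟨r2, key r2 hr2 e2 e2'⟩
    · exact ⟨r1, key r1 hr1 e1 e1'⟩

end PRaux

/-- All special lines have the same number of points. -/
theorem stmt_4 {Point Line : Type} (R : ProjRect Point Line) (s t : Line)
    (hs : R.Incid R.D s) (ht : R.Incid R.D t) :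
    Nonempty ({p : Point // R.Incid p s} ≃ {p : Point // R.Incid p t}) := by
  classical
  by_cases hst : s = t
  · subst hst; exact ⟨Equiv.refl _⟩
  obtain ⟨z, hzs, hzt⟩ := PRaux.exists_off R hs ht hst
  have exi1 : ∀ x : {p : Point // R.Incid p s},
      ∃ y : Point, R.Incid y t ∧ PRaux.Rel R z x.1 y :=
    fun x => PRaux.Rel.exi R hs ht hst hzs hzt x.2
  have exi2 : ∀ y : {p : Point // R.Incid p t},
      ∃ x : Point, R.Incid x s ∧ PRaux.Rel R z y.1 x :=
    fun y => PRaux.Rel.exi R ht hs (Ne.symm hst) hzt hzs y.2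
  refine ⟨{
    toFun := fun x => ⟨(exi1 x).choose, (exi1 x).choose_spec.1⟩
    invFun := fun y => ⟨(exi2 y).choose, (exi2 y).choose_spec.1⟩
    left_inv := ?_
    right_inv := ?_ }⟩
  · intro x
    obtain ⟨hy, hrel⟩ := (exi1 x).choose_spec
    obtain ⟨hx', hrel'⟩ := (exi2 ⟨(exi1 x).choose, hy⟩).choose_spec
    exact Subtype.ext (PRaux.Rel.uniq R ht hs (Ne.symm hst) hzt hzs hy hx' x.2
      hrel' (PRaux.Rel.symm R hrel))
  · intro y
    obtain ⟨hx, hrel⟩ := (exi2 y).choose_spec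
    obtain ⟨hy', hrel'⟩ := (exi1 ⟨(exi2 y).choose, hx⟩).choose_spec
    exact Subtype.ext (PRaux.Rel.uniq R hs ht hst hzs hzt hx hy' y.2
      hrel' (PRaux.Rel.symm R hrel))
end

section
/- In a finite projective rectangle of order (m,n) (i.e., with m+1 special lines and n+1 points on each special line), the number of lines through any ordinary point is n+1, of which exactly n are ordinary lines. -/
/-- A projective rectangle has order (m,n) if it has exactly m+1 special lines and
each special line has exactly n+1 points. -/
def ProjRect.HasOrder {Point Line : Type} (R : ProjRect Point Line) (m n : ℕ) : Prop :=
  Set.ncard {l : Line | R.Incid R.D l} = m + 1 ∧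
  ∀ s : Line, R.Incid R.D s → Set.ncard {p : Point | R.Incid p s} = n + 1

/-- In a finite projective rectangle of order (m,n), every ordinary point lies on
exactly n+1 lines, exactly n of which are ordinary. -/
theorem stmt_5 {Point Line : Type} (R : ProjRect Point Line) (m n : ℕ)
    (h : R.HasOrder m n) (p : Point) (hp : p ≠ R.D) :
    Set.ncard {l : Line | R.Incid p l} = n + 1 ∧
    Set.ncard {l : Line | R.Incid p l ∧ ¬R.Incid R.D l} = n := by
  classical
  obtain ⟨hm, hn⟩ := h
  -- the unique line through p and D
  obtain ⟨l0, ⟨hpl0, hDl0⟩, hl0u⟩ := R.A1 p R.D hp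
  -- there is a point off l0 distinct from D
  have hx : ∃ x : Point, x ≠ R.D ∧ ¬ R.Incid x l0 := by
    obtain ⟨a, b, c, d, hab, hac, had, hbc, hbd, hcd, h1, h2, h3, h4⟩ := R.A2
    by_contra hcon
    push_neg at hcon
    have key : ∀ x : Point, R.Incid x l0 := by
      intro x
      by_cases hxD : x = R.D
      · exact hxD ▸ hDl0
      · exact hcon x hxD
    exact h1 l0 ⟨key a, key b, key c⟩
  -- a special line avoiding p
  have hs : ∃ s : Line, R.Incid R.D s ∧ ¬ R.Incid p s := by
    obtain ⟨x, hxD, hxl0⟩ := hx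
    obtain ⟨s, ⟨hDs, hxs⟩, _⟩ := R.A1 R.D x (Ne.symm hxD)
    refine ⟨s, hDs, fun hps => ?_⟩
    have hse : s = l0 := hl0u s ⟨hps, hDs⟩
    exact hxl0 (hse ▸ hxs)
  obtain ⟨s, hDs, hps⟩ := hs
  have hnS : Set.ncard {q : Point | R.Incid q s} = n + 1 := hn s hDs
  have hSfin : {q : Point | R.Incid q s}.Finite := by
    by_contra hinf
    rw [Set.Infinite.ncard (by simpa using hinf)] at hnS
    omega
  -- the map sending a point q of s to the line through p and q
  have hline : ∀ q : Point, ∃ l : Line, R.Incid q s →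
      R.Incid p l ∧ R.Incid q l ∧ ∀ l', R.Incid p l' → R.Incid q l' → l' = l := by
    intro q
    by_cases hq : R.Incid q s
    · have hpq : p ≠ q := fun hpe => hps (hpe ▸ hq)
      obtain ⟨l, ⟨hl1, hl2⟩, hu⟩ := R.A1 p q hpq
      exact ⟨l, fun _ => ⟨hl1, hl2, fun l' ha hb => hu l' ⟨ha, hb⟩⟩⟩
    · exact ⟨l0, fun hq' => absurd hq' hq⟩
  choose g hg using hline
  have hbij : Set.BijOn g {q : Point | R.Incid q s} {l : Line | R.Incid p l} := by
    refine ⟨fun q hq => (hg q hq).1, ?_, ?_⟩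
    · intro q hq q' hq' hgq
      by_contra hne
      obtain ⟨l', ⟨_, _⟩, hu'⟩ := R.A1 q q' hne
      have h1 : s = l' := hu' s ⟨hq, hq'⟩
      have h2 : g q = l' := hu' (g q) ⟨(hg q hq).2.1, hgq ▸ (hg q' hq').2.1⟩
      exact hps (h1 ▸ h2 ▸ (hg q hq).1)
    · intro l hl
      have hls : l ≠ s := fun he => hps (he ▸ hl)
      obtain ⟨q, ⟨hqs, hql⟩, _⟩ := R.A5 s l hDs hls
      exact ⟨q, hqs, ((hg q hqs).2.2 l hl hql).symm⟩
  have himg : g '' {q : Point | R.Incid q s} = {l : Line | R.Incid p l} :=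
    Set.Subset.antisymm (Set.image_subset_iff.mpr hbij.1) hbij.2.2
  have hcount : Set.ncard {l : Line | R.Incid p l} = n + 1 := by
    rw [← himg, Set.ncard_image_of_injOn hbij.2.1, hnS]
  have hTfin : {l : Line | R.Incid p l}.Finite := by
    rw [← himg]; exact hSfin.image g
  refine ⟨hcount, ?_⟩
  have hdiff : {l : Line | R.Incid p l ∧ ¬R.Incid R.D l}
      = {l : Line | R.Incid p l} \ {l0} := by
    ext l
    simp only [Set.mem_setOf_eq, Set.mem_diff, Set.mem_singleton_iff]
    constructor
    · rintro ⟨h1, h2⟩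
      exact ⟨h1, fun he => h2 (he ▸ hDl0)⟩
    · rintro ⟨h1, h2⟩
      refine ⟨h1, fun hD => h2 (hl0u l ⟨h1, hD⟩)⟩
  rw [hdiff, Set.ncard_diff_singleton_of_mem (show l0 ∈ {l : Line | R.Incid p l} from hpl0), hcount]
  omega
end

section
/- In a projective rectangle of order (m,n), every special line has at least as many points as every ordinary line; that is, n ≥ m. -/
section Aux
variable {Point Line : Type}

namespace ProjRect

lemma uniq (R : ProjRect Point Line) {p q : Point} (h : p ≠ q) {l l' : Line}
    (h1 : R.Incid p l) (h2 : R.Incid q l) (h3 : R.Incid p l') (h4 : R.Incid q l') :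
    l = l' := by
  obtain ⟨m, -, hm⟩ := R.A1 p q h
  exact (hm l ⟨h1, h2⟩).trans (hm l' ⟨h3, h4⟩).symm

/-- Three pairwise distinct lines, at least one of which is ordinary. -/
lemma tri (R : ProjRect Point Line) :
    ∃ x y z : Line, x ≠ y ∧ x ≠ z ∧ y ≠ z ∧
      (¬R.Incid R.D x ∨ ¬R.Incid R.D y ∨ ¬R.Incid R.D z) := by
  obtain ⟨a, b, c, d, hab, hac, had, hbc, hbd, hcd, habc, -, -, -⟩ := R.A2
  obtain ⟨x, ⟨hax, hbx⟩, -⟩ := R.A1 a b hab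
  obtain ⟨y, ⟨hay, hcy⟩, -⟩ := R.A1 a c hac
  obtain ⟨z, ⟨hbz, hcz⟩, -⟩ := R.A1 b c hbc
  have hxy : x ≠ y := fun h => habc x ⟨hax, hbx, h ▸ hcy⟩
  have hxz : x ≠ z := fun h => habc x ⟨hax, hbx, h ▸ hcz⟩
  have hyz : y ≠ z := fun h => habc y ⟨hay, h ▸ hbz, hcy⟩
  refine ⟨x, y, z, hxy, hxz, hyz, ?_⟩
  by_contra hcon
  push_neg at hcon
  obtain ⟨hDx, hDy, hDz⟩ := hcon
  by_cases hDa : R.D = a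
  · exact habc z ⟨hDa ▸ hDz, hbz, hcz⟩
  · exact hxy (R.uniq (Ne.symm hDa) hax hDx hay hDy)

/-- A point off two given lines exists. -/
lemma exists_off (R : ProjRect Point Line) (l s : Line) :
    ∃ e : Point, ¬R.Incid e l ∧ ¬R.Incid e s := by
  obtain ⟨x, y, z, hxy, hxz, hyz, -⟩ := R.tri
  have hlam : ∃ lam : Line, lam ≠ l ∧ lam ≠ s := by
    by_cases h1 : x = l <;> by_cases h2 : x = s <;> by_cases h3 : y = l <;>
      by_cases h4 : y = s <;> by_cases h5 : z = l <;> by_cases h6 : z = s <;>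
      first
        | exact ⟨x, h1, h2⟩
        | exact ⟨y, h3, h4⟩
        | exact ⟨z, h5, h6⟩
        | (exfalso; subst_vars; simp_all)
  obtain ⟨lam, hlaml, hlams⟩ := hlam
  obtain ⟨p, q, r, hpq, hpr, hqr, hp, hq, hr⟩ := R.A3 lam
  have two : ∀ (μ : Line), μ ≠ lam → ∀ u v : Point, u ≠ v → R.Incid u lam →
      R.Incid v lam → R.Incid u μ → R.Incid v μ → False := by
    intro μ hμ u v huv hu hv hu' hv'
    exact hμ (R.uniq huv hu' hv' hu hv)
  by_contra hcon
  push_neg at hcon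
  have cp : R.Incid p l ∨ R.Incid p s := or_iff_not_imp_left.mpr (hcon p)
  have cq : R.Incid q l ∨ R.Incid q s := or_iff_not_imp_left.mpr (hcon q)
  have cr : R.Incid r l ∨ R.Incid r s := or_iff_not_imp_left.mpr (hcon r)
  rcases cp with hpc | hpc <;> rcases cq with hqc | hqc <;> rcases cr with hrc | hrc
  · exact two l hlaml.symm p q hpq hp hq hpc hqc
  · exact two l hlaml.symm p q hpq hp hq hpc hqc
  · exact two l hlaml.symm p r hpr hp hr hpc hrc
  · exact two s hlams.symm q r hqr hq hr hqc hrc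
  · exact two l hlaml.symm q r hqr hq hr hqc hrc
  · exact two s hlams.symm p r hpr hp hr hpc hrc
  · exact two s hlams.symm p q hpq hp hq hpc hqc
  · exact two s hlams.symm p q hpq hp hq hpc hqc

/-- Injection from the points of an ordinary line into the points of a special line. -/
lemma exists_injOn (R : ProjRect Point Line) {s l : Line} (hs : R.Incid R.D s)
    (hl : ¬R.Incid R.D l) :
    ∃ f : Point → Point, (∀ p ∈ {p : Point | R.Incid p l}, f p ∈ {p : Point | R.Incid p s}) ∧
      Set.InjOn f {p : Point | R.Incid p l} := by
  obtain ⟨e, hel, hes⟩ := R.exists_off l s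
  have hstep : ∀ p' : Point, ∃ x : Point, R.Incid p' l →
      R.Incid x s ∧ ∃ μ : Line, R.Incid e μ ∧ R.Incid p' μ ∧ R.Incid x μ := by
    intro p'
    by_cases hp' : R.Incid p' l
    · have hep : e ≠ p' := fun h => hel (h ▸ hp')
      obtain ⟨μ, ⟨he1, hp1⟩, -⟩ := R.A1 e p' hep
      have hμs : μ ≠ s := fun h => hes (h ▸ he1)
      obtain ⟨x, ⟨hx1, hx2⟩, -⟩ := R.A5 s μ hs hμs
      exact ⟨x, fun _ => ⟨hx1, μ, he1, hp1, hx2⟩⟩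
    · exact ⟨e, fun h => absurd h hp'⟩
  choose f hf using hstep
  refine ⟨f, fun p hp => (hf p hp).1, ?_⟩
  intro a ha b hb hab
  obtain ⟨hfa, μa, hea, haa, hxa⟩ := hf a ha
  obtain ⟨hfb, μb, heb, hbb, hxb⟩ := hf b hb
  have hne : e ≠ f a := fun h => hes (h ▸ hfa)
  have hμ : μa = μb := R.uniq hne hea hxa heb (hab ▸ hxb)
  by_contra hne2
  have hμl : μa = l := R.uniq hne2 haa (hμ ▸ hbb) ha hb
  exact hel (hμl ▸ hea)

lemma card_le (R : ProjRect Point Line) {s l : Line} (hs : R.Incid R.D s)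
    (hl : ¬R.Incid R.D l) (hfin : {p : Point | R.Incid p s}.Finite) :
    Set.ncard {p : Point | R.Incid p l} ≤ Set.ncard {p : Point | R.Incid p s} := by
  obtain ⟨f, hmap, hinj⟩ := R.exists_injOn hs hl
  exact Set.ncard_le_ncard_of_injOn f hmap hinj hfin

lemma finite_ordinary (R : ProjRect Point Line) {s l : Line} (hs : R.Incid R.D s)
    (hl : ¬R.Incid R.D l) (hfin : {p : Point | R.Incid p s}.Finite) :
    {p : Point | R.Incid p l}.Finite := by
  obtain ⟨f, hmap, hinj⟩ := R.exists_injOn hs hl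
  exact Set.Finite.of_finite_image (hfin.subset (Set.image_subset_iff.mpr hmap)) hinj

end ProjRect
end Aux

/-- In a projective rectangle of order (m,n), every special line has at least as many
points as every ordinary line; that is, n ≥ m. -/
theorem stmt_6 {Point Line : Type} (R : ProjRect Point Line) (m n : ℕ)
    (h : R.HasOrder m n) :
    (∀ s l : Line, R.Incid R.D s → ¬R.Incid R.D l →
      Set.ncard {p : Point | R.Incid p l} ≤ Set.ncard {p : Point | R.Incid p s}) ∧
    m ≤ n := by
  obtain ⟨hm, hn⟩ := h
  have hfin : ∀ s : Line, R.Incid R.D s → {p : Point | R.Incid p s}.Finite := by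
    intro s hs
    exact Set.finite_of_ncard_ne_zero (by rw [hn s hs]; omega)
  constructor
  · intro s l hs hl
    exact R.card_le hs hl (hfin s hs)
  · obtain ⟨s, hs⟩ : {l : Line | R.Incid R.D l}.Nonempty :=
      Set.nonempty_of_ncard_ne_zero (by rw [hm]; omega)
    obtain ⟨x, y, z, -, -, -, hord⟩ := R.tri
    have hex : ∃ l : Line, ¬R.Incid R.D l := by
      rcases hord with h' | h' | h'
      exacts [⟨x, h'⟩, ⟨y, h'⟩, ⟨z, h'⟩]
    obtain ⟨l, hl⟩ := hex
    have hsf := hfin s hs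
    have hlfin := R.finite_ordinary hs hl hsf
    have hstep : ∀ t : Line, ∃ x : Point, R.Incid R.D t → R.Incid x t ∧ R.Incid x l := by
      intro t
      by_cases ht : R.Incid R.D t
      · have hne : l ≠ t := fun hh => hl (hh ▸ ht)
        obtain ⟨x, ⟨h1, h2⟩, -⟩ := R.A5 t l ht hne
        exact ⟨x, fun _ => ⟨h1, h2⟩⟩
      · exact ⟨R.D, fun hh => absurd hh ht⟩
    choose g hg using hstep
    have h2 : Set.ncard {t : Line | R.Incid R.D t} ≤ Set.ncard {p : Point | R.Incid p l} := by
      apply Set.ncard_le_ncard_of_injOn g (fun t ht => (hg t ht).2) _ hlfin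
      intro t ht t' ht' heq
      have h1 := hg t ht
      have h1' := hg t' ht'
      have hx : g t ≠ R.D := fun hh => hl (hh ▸ h1.2)
      exact R.uniq (Ne.symm hx) ht h1.1 ht' (heq ▸ h1'.1)
    have h3 := R.card_le hs hl hsf
    rw [hm] at h2
    rw [hn s hs] at h3
    omega
end

section
/- A finite projective rectangle of order (m,n) has exactly (m+1)n ordinary points and exactly n^2 ordinary lines. -/
section Aux

variable {Point Line : Type} (R : ProjRect Point Line)

/-- Uniqueness of the line through two distinct points. -/
lemma PR.uniq_line {p q : Point} {l l' : Line} (hpq : p ≠ q)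
    (h1 : R.Incid p l) (h2 : R.Incid q l) (h3 : R.Incid p l') (h4 : R.Incid q l') :
    l = l' := by
  obtain ⟨u, _, hu⟩ := R.A1 p q hpq
  rw [hu l ⟨h1, h2⟩, hu l' ⟨h3, h4⟩]

/-- Two distinct special lines meet only at D. -/
lemma PR.special_inter {s1 s2 : Line} (h1 : R.Incid R.D s1) (h2 : R.Incid R.D s2)
    (hne : s1 ≠ s2) {p : Point} (hp1 : R.Incid p s1) (hp2 : R.Incid p s2) : p = R.D := by
  by_contra hpD
  exact hne (PR.uniq_line R hpD hp1 h1 hp2 h2)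

/-- There exist two distinct special lines. -/
lemma PR.two_special : ∃ s1 s2 : Line,
    R.Incid R.D s1 ∧ R.Incid R.D s2 ∧ s1 ≠ s2 := by
  obtain ⟨a, b, c, d, hab, hac, had, hbc, hbd, hcd,
    habc, habd, hacd, hbcd⟩ := R.A2
  -- pick three of the four points distinct from D, with no line through all three
  have key : ∀ x y z : Point, x ≠ R.D → y ≠ R.D → z ≠ R.D →
      x ≠ y → x ≠ z → y ≠ z →
      (∀ l : Line, ¬(R.Incid x l ∧ R.Incid y l ∧ R.Incid z l)) →
      ∃ s1 s2 : Line, R.Incid R.D s1 ∧ R.Incid R.D s2 ∧ s1 ≠ s2 := by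
    intro x y z hx hy hz hxy hxz hyz hncol
    obtain ⟨s1, ⟨hDs1, hxs1⟩, -⟩ := R.A1 R.D x (Ne.symm hx)
    obtain ⟨s2, ⟨hDs2, hys2⟩, -⟩ := R.A1 R.D y (Ne.symm hy)
    obtain ⟨s3, ⟨hDs3, hzs3⟩, -⟩ := R.A1 R.D z (Ne.symm hz)
    by_cases h12 : s1 = s2
    · refine ⟨s1, s3, hDs1, hDs3, fun h13 => ?_⟩
      exact hncol s1 ⟨hxs1, h12 ▸ hys2, h13 ▸ hzs3⟩
    · exact ⟨s1, s2, hDs1, hDs2, h12⟩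
  by_cases ha : a = R.D
  · exact key b c d (ha ▸ hab.symm) (ha ▸ hac.symm) (ha ▸ had.symm) hbc hbd hcd hbcd
  by_cases hb : b = R.D
  · exact key a c d ha (hb ▸ hbc.symm) (hb ▸ hbd.symm) hac had hcd hacd
  by_cases hc : c = R.D
  · exact key a b d ha hb (hc ▸ hcd.symm) hab had hbd habd
  · exact key a b c ha hb hc hab hac hbc habc


/-- The line joining two distinct points. -/
noncomputable def PR.join {p q : Point} (h : p ≠ q) : Line := (R.A1 p q h).choose

lemma PR.join_incid {p q : Point} (h : p ≠ q) :
    R.Incid p (PR.join R h) ∧ R.Incid q (PR.join R h) := (R.A1 p q h).choose_spec.1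

lemma PR.join_eq {p q : Point} (h : p ≠ q) {l : Line}
    (hp : R.Incid p l) (hq : R.Incid q l) : l = PR.join R h :=
  PR.uniq_line R h hp hq (PR.join_incid R h).1 (PR.join_incid R h).2

end Aux

/-- A finite projective rectangle of order (m,n) has exactly (m+1)n ordinary points
and exactly n^2 ordinary lines. -/
theorem stmt_7 {Point Line : Type} (R : ProjRect Point Line) (m n : ℕ)
    (h : R.HasOrder m n) :
    Set.ncard {p : Point | p ≠ R.D} = (m + 1) * n ∧
    Set.ncard {l : Line | ¬R.Incid R.D l} = n ^ 2 := by
  classical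
  obtain ⟨hS, hP⟩ := h
  -- finiteness of the set of special lines
  have hSfin : {l : Line | R.Incid R.D l}.Finite :=
    Set.finite_of_ncard_ne_zero (by omega)
  -- points on a special line
  have hPfin : ∀ s : Line, R.Incid R.D s → {p : Point | R.Incid p s}.Finite := by
    intro s hs
    exact Set.finite_of_ncard_ne_zero (by rw [hP s hs]; omega)
  -- each special line has n ordinary points
  have hfib : ∀ s : Line, R.Incid R.D s →
      Set.ncard {p : Point | R.Incid p s ∧ p ≠ R.D} = n := by
    intro s hs
    have : {p : Point | R.Incid p s ∧ p ≠ R.D}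
        = {p : Point | R.Incid p s} \ {R.D} := by
      ext p; simp [and_comm]
    rw [this, Set.ncard_diff_singleton_of_mem (show R.D ∈ {p : Point | R.Incid p s} from hs), hP s hs]
    omega
  constructor
  · -- ordinary points
    haveI : Fintype ↥{l : Line | R.Incid R.D l} := hSfin.fintype
    have hfibfin : ∀ s : ↥{l : Line | R.Incid R.D l},
        {p : Point | R.Incid p (s : Line) ∧ p ≠ R.D}.Finite := by
      intro s
      exact ((hPfin s s.2).subset (fun p hp => hp.1))
    haveI : ∀ s : ↥{l : Line | R.Incid R.D l},
        Fintype ↥{p : Point | R.Incid p (s : Line) ∧ p ≠ R.D} :=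
      fun s => (hfibfin s).fintype
    -- bijection : ordinary points ≃ Σ special line, ordinary points on it
    have e : (Σ s : ↥{l : Line | R.Incid R.D l},
        ↥{p : Point | R.Incid p (s : Line) ∧ p ≠ R.D}) ≃ ↥{p : Point | p ≠ R.D} := by
      refine Equiv.ofBijective (fun x => ⟨(x.2 : Point), x.2.2.2⟩) ⟨?_, ?_⟩
      · rintro ⟨⟨s, hs⟩, ⟨p, hps, hpD⟩⟩ ⟨⟨s', hs'⟩, ⟨p', hps', hpD'⟩⟩ hpp
        simp only [Subtype.mk.injEq] at hpp
        subst hpp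
        have : s = s' := PR.uniq_line R hpD hps hs hps' hs'
        subst this
        rfl
      · rintro ⟨p, hp⟩
        obtain ⟨s, ⟨hDs, hps⟩, -⟩ := R.A1 R.D p (Ne.symm hp)
        exact ⟨⟨⟨s, hDs⟩, ⟨p, hps, hp⟩⟩, rfl⟩
    have hcard := Nat.card_congr e
    rw [Nat.card_coe_set_eq, Nat.card_eq_fintype_card, Fintype.card_sigma] at hcard
    rw [← hcard]
    have hsum : ∀ s : ↥{l : Line | R.Incid R.D l},
        Fintype.card ↥{p : Point | R.Incid p (s : Line) ∧ p ≠ R.D} = n := by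
      intro s
      rw [← Nat.card_eq_fintype_card, Nat.card_coe_set_eq, hfib s s.2]
    rw [Finset.sum_congr rfl (fun s _ => hsum s), Finset.sum_const, smul_eq_mul]
    congr 1
    rw [Finset.card_univ, ← Nat.card_eq_fintype_card, Nat.card_coe_set_eq, hS]
  · -- ordinary lines
    obtain ⟨s1, s2, hDs1, hDs2, hs12⟩ := PR.two_special R
    have hnecross : ∀ (p1 p2 : Point), R.Incid p1 s1 → p1 ≠ R.D →
        R.Incid p2 s2 → p2 ≠ R.D → p1 ≠ p2 := by
      intro p1 p2 h1 hd1 h2 hd2 hpe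
      exact hd1 (PR.special_inter R hDs1 hDs2 hs12 h1 (hpe ▸ h2))
    -- bijection : (ordinary points of s1) × (ordinary points of s2) ≃ ordinary lines
    have e : (↥{p : Point | R.Incid p s1 ∧ p ≠ R.D} × ↥{p : Point | R.Incid p s2 ∧ p ≠ R.D})
        ≃ ↥{l : Line | ¬R.Incid R.D l} := by
      have hmap : ∀ x : (↥{p : Point | R.Incid p s1 ∧ p ≠ R.D} ×
          ↥{p : Point | R.Incid p s2 ∧ p ≠ R.D}),
          ¬R.Incid R.D (PR.join R (hnecross x.1 x.2 x.1.2.1 x.1.2.2 x.2.2.1 x.2.2.2)) := by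
        rintro ⟨⟨p1, hp1s, hp1D⟩, ⟨p2, hp2s, hp2D⟩⟩ hD
        have hj := PR.join_incid R (hnecross p1 p2 hp1s hp1D hp2s hp2D)
        have : PR.join R (hnecross p1 p2 hp1s hp1D hp2s hp2D) = s1 :=
          PR.uniq_line R hp1D hj.1 hD hp1s hDs1
        exact hp2D (PR.special_inter R hDs1 hDs2 hs12 (this ▸ hj.2) hp2s)
      refine Equiv.ofBijective (fun x =>
        ⟨PR.join R (hnecross x.1 x.2 x.1.2.1 x.1.2.2 x.2.2.1 x.2.2.2), hmap x⟩) ⟨?_, ?_⟩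
      · rintro ⟨⟨p1, hp1s, hp1D⟩, ⟨p2, hp2s, hp2D⟩⟩ ⟨⟨q1, hq1s, hq1D⟩, ⟨q2, hq2s, hq2D⟩⟩ hll
        simp only [Subtype.mk.injEq] at hll
        set l := PR.join R (hnecross p1 p2 hp1s hp1D hp2s hp2D) with hldef
        have hjp := PR.join_incid R (hnecross p1 p2 hp1s hp1D hp2s hp2D)
        have hjq := PR.join_incid R (hnecross q1 q2 hq1s hq1D hq2s hq2D)
        rw [← hll] at hjq
        have hlD : ¬R.Incid R.D l :=
          hmap ⟨⟨p1, hp1s, hp1D⟩, ⟨p2, hp2s, hp2D⟩⟩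
        have hls1 : l ≠ s1 := fun hx => hlD (hx ▸ hDs1)
        have hls2 : l ≠ s2 := fun hx => hlD (hx ▸ hDs2)
        obtain ⟨w1, -, hw1⟩ := R.A5 s1 l hDs1 hls1
        obtain ⟨w2, -, hw2⟩ := R.A5 s2 l hDs2 hls2
        have e1 : p1 = q1 := by rw [hw1 p1 ⟨hp1s, hjp.1⟩, hw1 q1 ⟨hq1s, hjq.1⟩]
        have e2 : p2 = q2 := by rw [hw2 p2 ⟨hp2s, hjp.2⟩, hw2 q2 ⟨hq2s, hjq.2⟩]
        subst e1; subst e2; rfl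
      · rintro ⟨l, hl⟩
        have hls1 : l ≠ s1 := fun hx => hl (hx ▸ hDs1)
        have hls2 : l ≠ s2 := fun hx => hl (hx ▸ hDs2)
        obtain ⟨p1, ⟨hp1s, hp1l⟩, -⟩ := R.A5 s1 l hDs1 hls1
        obtain ⟨p2, ⟨hp2s, hp2l⟩, -⟩ := R.A5 s2 l hDs2 hls2
        have hp1D : p1 ≠ R.D := fun hd => hl (hd ▸ hp1l)
        have hp2D : p2 ≠ R.D := fun hd => hl (hd ▸ hp2l)
        refine ⟨⟨⟨p1, hp1s, hp1D⟩, ⟨p2, hp2s, hp2D⟩⟩, ?_⟩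
        exact Subtype.ext (PR.join_eq R (hnecross p1 p2 hp1s hp1D hp2s hp2D) hp1l hp2l).symm
    have hcard := Nat.card_congr e
    rw [Nat.card_prod, Nat.card_coe_set_eq, Nat.card_coe_set_eq, Nat.card_coe_set_eq,
      hfib s1 hDs1, hfib s2 hDs2] at hcard
    rw [← hcard, sq]
end

section
/- In a projective rectangle, the special point D belongs to every full projective subplane, and for every special line s and full subplane π, the intersection s ∩ π is a line of π. -/
/-- A subplane of a projective rectangle: sets of points and lines which, with the
induced incidence, form a projective plane. -/
def ProjRect.IsSubplane {Point Line : Type} (R : ProjRect Point Line)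
    (P' : Set Point) (L' : Set Line) : Prop :=
  (∀ p q, p ∈ P' → q ∈ P' → p ≠ q → ∃! l, l ∈ L' ∧ R.Incid p l ∧ R.Incid q l) ∧
  (∀ l m, l ∈ L' → m ∈ L' → l ≠ m → ∃ x, x ∈ P' ∧ R.Incid x l ∧ R.Incid x m) ∧
  (∃ a b c d, a ∈ P' ∧ b ∈ P' ∧ c ∈ P' ∧ d ∈ P' ∧
    a ≠ b ∧ a ≠ c ∧ a ≠ d ∧ b ≠ c ∧ b ≠ d ∧ c ≠ d ∧
    (∀ l ∈ L', ¬(R.Incid a l ∧ R.Incid b l ∧ R.Incid c l)) ∧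
    (∀ l ∈ L', ¬(R.Incid a l ∧ R.Incid b l ∧ R.Incid d l)) ∧
    (∀ l ∈ L', ¬(R.Incid a l ∧ R.Incid c l ∧ R.Incid d l)) ∧
    (∀ l ∈ L', ¬(R.Incid b l ∧ R.Incid c l ∧ R.Incid d l)))

/-- A subplane is full if it contains every point of each ordinary line it contains. -/
def ProjRect.IsFull {Point Line : Type} (R : ProjRect Point Line)
    (P' : Set Point) (L' : Set Line) : Prop :=
  ∀ l ∈ L', ¬R.Incid R.D l → ∀ p, R.Incid p l → p ∈ P'

namespace ProjRect

variable {Point Line : Type} (R : ProjRect Point Line)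

/-- Two distinct points lie on at most one line. -/
lemma line_unique' {x y : Point} {l m : Line} (hxy : x ≠ y)
    (hxl : R.Incid x l) (hyl : R.Incid y l) (hxm : R.Incid x m) (hym : R.Incid y m) :
    l = m := by
  obtain ⟨n, -, hu⟩ := R.A1 x y hxy
  rw [hu l ⟨hxl, hyl⟩, hu m ⟨hxm, hym⟩]

/-- Two ordinary subplane lines through a subplane point `p` either give two distinct
subplane points on a special line `s`, or `p` itself lies on `s`. -/
lemma pencil' {P' : Set Point} {L' : Set Line} (hfull : R.IsFull P' L')
    {s : Line} (hs : R.Incid R.D s) {p : Point} (hp : p ∈ P')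
    {l1 l2 : Line} (hl1 : l1 ∈ L') (hl2 : l2 ∈ L') (hne : l1 ≠ l2)
    (h1 : R.Incid p l1) (h2 : R.Incid p l2)
    (o1 : ¬R.Incid R.D l1) (o2 : ¬R.Incid R.D l2) :
    (∃ x y, x ∈ P' ∧ y ∈ P' ∧ x ≠ y ∧ R.Incid x s ∧ R.Incid y s) ∨ R.Incid p s := by
  have hsl1 : l1 ≠ s := fun h => o1 (h ▸ hs)
  have hsl2 : l2 ≠ s := fun h => o2 (h ▸ hs)
  obtain ⟨x, ⟨hxs, hxl⟩, -⟩ := R.A5 s l1 hs hsl1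
  obtain ⟨y, ⟨hys, hyl⟩, -⟩ := R.A5 s l2 hs hsl2
  have hxP := hfull l1 hl1 o1 x hxl
  have hyP := hfull l2 hl2 o2 y hyl
  by_cases hxy : x = y
  · subst hxy
    by_cases hxp : x = p
    · exact Or.inr (hxp ▸ hxs)
    · exact absurd (R.line_unique' hxp hxl h1 hyl h2) hne
  · exact Or.inl ⟨x, y, hxP, hyP, hxy, hxs, hys⟩

/-- From a subplane point `v ≠ D` lying on three pairwise distinct subplane lines,
either a special line `s` contains two distinct subplane points, or `v ∈ s`. -/
lemma vertex' {P' : Set Point} {L' : Set Line} (hfull : R.IsFull P' L')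
    {s : Line} (hs : R.Incid R.D s) {v : Point} (hv : v ∈ P') (hvD : v ≠ R.D)
    {l1 l2 l3 : Line} (hl1 : l1 ∈ L') (hl2 : l2 ∈ L') (hl3 : l3 ∈ L')
    (i1 : R.Incid v l1) (i2 : R.Incid v l2) (i3 : R.Incid v l3)
    (n12 : l1 ≠ l2) (n13 : l1 ≠ l3) (n23 : l2 ≠ l3) :
    (∃ x y, x ∈ P' ∧ y ∈ P' ∧ x ≠ y ∧ R.Incid x s ∧ R.Incid y s) ∨ R.Incid v s := by
  by_cases d1 : R.Incid R.D l1
  · have d2 : ¬R.Incid R.D l2 := fun d2 => n12 (R.line_unique' hvD i1 d1 i2 d2)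
    have d3 : ¬R.Incid R.D l3 := fun d3 => n13 (R.line_unique' hvD i1 d1 i3 d3)
    exact R.pencil' hfull hs hv hl2 hl3 n23 i2 i3 d2 d3
  · by_cases d2 : R.Incid R.D l2
    · have d3 : ¬R.Incid R.D l3 := fun d3 => n23 (R.line_unique' hvD i2 d2 i3 d3)
      exact R.pencil' hfull hs hv hl1 hl3 n13 i1 i3 d1 d3
    · exact R.pencil' hfull hs hv hl1 hl2 n12 i1 i2 d1 d2

end ProjRect

/-- The special point D lies in every full subplane, and the intersection of every
special line with a full subplane is a line of the subplane. -/
theorem stmt_8 {Point Line : Type} (R : ProjRect Point Line)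
    (P' : Set Point) (L' : Set Line)
    (hsub : R.IsSubplane P' L') (hfull : R.IsFull P' L') :
    R.D ∈ P' ∧ ∀ s : Line, R.Incid R.D s → s ∈ L' := by
  obtain ⟨hjoin, hmeet, a, b, c, d, hPa, hPb, hPc, hPd,
    hab, hac, had, hbc, hbd, hcd, nabc, nabd, nacd, nbcd⟩ := hsub
  -- the six sides of the quadrangle
  obtain ⟨lab, ⟨labL, ja1, jb1⟩, -⟩ := hjoin a b hPa hPb hab
  obtain ⟨lac, ⟨lacL, ja2, jc2⟩, -⟩ := hjoin a c hPa hPc hac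
  obtain ⟨lad, ⟨ladL, ja3, jd3⟩, -⟩ := hjoin a d hPa hPd had
  obtain ⟨lbc, ⟨lbcL, jb4, jc4⟩, -⟩ := hjoin b c hPb hPc hbc
  obtain ⟨lbd, ⟨lbdL, jb5, jd5⟩, -⟩ := hjoin b d hPb hPd hbd
  obtain ⟨lcd, ⟨lcdL, jc6, jd6⟩, -⟩ := hjoin c d hPc hPd hcd
  -- pairwise distinctness of sides through a common vertex
  have dA1 : lab ≠ lac := fun h => nabc lac lacL ⟨ja2, h ▸ jb1, jc2⟩
  have dA2 : lab ≠ lad := fun h => nabd lad ladL ⟨ja3, h ▸ jb1, jd3⟩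
  have dA3 : lac ≠ lad := fun h => nacd lad ladL ⟨ja3, h ▸ jc2, jd3⟩
  have dB1 : lab ≠ lbc := fun h => nabc lbc lbcL ⟨h ▸ ja1, jb4, jc4⟩
  have dB2 : lab ≠ lbd := fun h => nabd lbd lbdL ⟨h ▸ ja1, jb5, jd5⟩
  have dB3 : lbc ≠ lbd := fun h => nbcd lbd lbdL ⟨jb5, h ▸ jc4, jd5⟩
  have dC1 : lac ≠ lbc := fun h => nabc lbc lbcL ⟨h ▸ ja2, jb4, jc4⟩
  have dC2 : lac ≠ lcd := fun h => nacd lcd lcdL ⟨h ▸ ja2, jc6, jd6⟩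
  have dC3 : lbc ≠ lcd := fun h => nbcd lcd lcdL ⟨h ▸ jb4, jc6, jd6⟩
  -- every special line contains two distinct subplane points
  have key : ∀ s : Line, R.Incid R.D s →
      ∃ x y, x ∈ P' ∧ y ∈ P' ∧ x ≠ y ∧ R.Incid x s ∧ R.Incid y s := by
    intro s hs
    have HA : a ≠ R.D → _ ∨ R.Incid a s := fun h =>
      R.vertex' hfull hs hPa h labL lacL ladL ja1 ja2 ja3 dA1 dA2 dA3
    have HB : b ≠ R.D → _ ∨ R.Incid b s := fun h =>
      R.vertex' hfull hs hPb h labL lbcL lbdL jb1 jb4 jb5 dB1 dB2 dB3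
    have HC : c ≠ R.D → _ ∨ R.Incid c s := fun h =>
      R.vertex' hfull hs hPc h lacL lbcL lcdL jc2 jc4 jc6 dC1 dC2 dC3
    by_cases haD : a = R.D
    · have hbD : b ≠ R.D := fun h => hab (haD.trans h.symm)
      have hcD : c ≠ R.D := fun h => hac (haD.trans h.symm)
      rcases HB hbD with g | hbs
      · exact g
      rcases HC hcD with g | hcs
      · exact g
      exact ⟨b, c, hPb, hPc, hbc, hbs, hcs⟩
    · by_cases hbD : b = R.D
      · have hcD : c ≠ R.D := fun h => hbc (hbD.trans h.symm)
        rcases HA haD with g | has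
        · exact g
        rcases HC hcD with g | hcs
        · exact g
        exact ⟨a, c, hPa, hPc, hac, has, hcs⟩
      · rcases HA haD with g | has
        · exact g
        rcases HB hbD with g | hbs
        · exact g
        exact ⟨a, b, hPa, hPb, hab, has, hbs⟩
  -- hence every special line is a subplane line
  have hL : ∀ s : Line, R.Incid R.D s → s ∈ L' := by
    intro s hs
    obtain ⟨x, y, hxP, hyP, hxy, hxs, hys⟩ := key s hs
    obtain ⟨m, ⟨hmL, hxm, hym⟩, -⟩ := hjoin x y hxP hyP hxy
    exact (R.line_unique' hxy hxm hym hxs hys) ▸ hmL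
  refine ⟨?_, hL⟩
  -- find p, q not collinear with D
  obtain ⟨a', b', c', d', hab', hac', had', hbc', hbd', hcd',
    nabc', nabd', nacd', nbcd'⟩ := R.A2
  obtain ⟨p, q, hpD, hqD, hpq, hnc⟩ :
      ∃ p q : Point, p ≠ R.D ∧ q ≠ R.D ∧ p ≠ q ∧
        ∀ l : Line, ¬(R.Incid p l ∧ R.Incid q l ∧ R.Incid R.D l) := by
    by_cases h1 : ∃ l : Line, R.Incid a' l ∧ R.Incid b' l ∧ R.Incid R.D l
    · obtain ⟨l1, hal1, hbl1, hDl1⟩ := h1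
      by_cases haD : a' = R.D
      · refine ⟨b', c', fun h => hab' (haD.trans h.symm),
          fun h => hac' (haD.trans h.symm), hbc', fun l ⟨hb, hc, hD⟩ => ?_⟩
        exact nabc' l ⟨haD ▸ hD, hb, hc⟩
      · refine ⟨a', c', haD, fun h => ?_, hac', fun l ⟨ha, hc, hD⟩ => ?_⟩
        · exact nabc' l1 ⟨hal1, hbl1, h ▸ hDl1⟩
        · have : l1 = l := R.line_unique' haD hal1 hDl1 ha hD
          exact nabc' l1 ⟨hal1, hbl1, this ▸ hc⟩
    · refine ⟨a', b', fun h => ?_, fun h => ?_, hab', fun l hl => h1 ⟨l, hl⟩⟩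
      · obtain ⟨l, ⟨ha, hb⟩, -⟩ := R.A1 a' b' hab'
        exact h1 ⟨l, ha, hb, h ▸ ha⟩
      · obtain ⟨l, ⟨ha, hb⟩, -⟩ := R.A1 a' b' hab'
        exact h1 ⟨l, ha, hb, h ▸ hb⟩
  obtain ⟨sp, ⟨hpsp, hDsp⟩, -⟩ := R.A1 p R.D hpD
  obtain ⟨sq, ⟨hqsq, hDsq⟩, -⟩ := R.A1 q R.D hqD
  have hspsq : sp ≠ sq := fun h => hnc sp ⟨hpsp, h ▸ hqsq, hDsp⟩
  obtain ⟨x, hxP, hxsp, hxsq⟩ := hmeet sp sq (hL sp hDsp) (hL sq hDsq) hspsq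
  by_cases hxD : x = R.D
  · exact hxD ▸ hxP
  · exact absurd (R.line_unique' hxD hxsp hDsp hxsq hDsq) hspsq
end

section
/- In a projective rectangle, if two ordinary lines intersect in a point, then there is a unique full projective subplane containing both lines. -/
namespace PR9

variable {Point Line : Type}

section basic
variable (R : ProjRect Point Line)

lemma lu {a b : Point} {l m : Line} (hab : a ≠ b) (hal : R.Incid a l) (hbl : R.Incid b l)
    (ham : R.Incid a m) (hbm : R.Incid b m) : l = m := by
  obtain ⟨n, -, hn⟩ := R.A1 a b hab
  rw [hn l ⟨hal, hbl⟩, hn m ⟨ham, hbm⟩]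

lemma lineOf {a b : Point} (hab : a ≠ b) : ∃ l, R.Incid a l ∧ R.Incid b l :=
  (R.A1 a b hab).exists

lemma three (l : Line) (v : Point) :
    ∃ x y, x ≠ y ∧ x ≠ v ∧ y ≠ v ∧ R.Incid x l ∧ R.Incid y l := by
  obtain ⟨x, y, z, hxy, hxz, hyz, hx, hy, hz⟩ := R.A3 l
  by_cases h : x = v
  · exact ⟨y, z, hyz, fun h' => hxy (h.trans h'.symm), fun h' => hxz (h.trans h'.symm), hy, hz⟩
  · by_cases h' : y = v
    · exact ⟨x, z, hxz, h, fun h'' => hyz (h'.trans h''.symm), hx, hz⟩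
    · exact ⟨x, y, hxy, h, h', hx, hy⟩

lemma smeet {s l : Line} (hs : R.Incid R.D s) (hls : l ≠ s) :
    ∃ q, R.Incid q s ∧ R.Incid q l :=
  (R.A5 s l hs hls).exists

end basic

/-- Ordinary cross lines. -/
def OC (R : ProjRect Point Line) (l1 l2 : Line) (p : Point) : Set Line :=
  {l | ¬R.Incid R.D l ∧ ∃ a b, R.Incid a l1 ∧ R.Incid b l2 ∧ a ≠ p ∧ b ≠ p ∧
    R.Incid a l ∧ R.Incid b l}

/-- Points of the generated subplane. -/
def PS (R : ProjRect Point Line) (l1 l2 : Line) (p : Point) : Set Point :=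
  {x | R.Incid x l1 ∨ R.Incid x l2 ∨ x = R.D ∨ ∃ l ∈ OC R l1 l2 p, R.Incid x l}

/-- Lines of the generated subplane. -/
def LS (R : ProjRect Point Line) (l1 l2 : Line) (p : Point) : Set Line :=
  {l | l = l1 ∨ l = l2 ∨ R.Incid R.D l ∨ l ∈ OC R l1 l2 p ∨
    (¬R.Incid R.D l ∧ R.Incid p l ∧ ∃ x, x ≠ p ∧ R.Incid x l ∧ x ∈ PS R l1 l2 p)}

section ctx

variable (R : ProjRect Point Line) {l1 l2 : Line} {p : Point}
  (h1 : ¬R.Incid R.D l1) (h2 : ¬R.Incid R.D l2) (hne : l1 ≠ l2)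
  (hp1 : R.Incid p l1) (hp2 : R.Incid p l2)

include h1 h2 hne hp1 hp2
set_option linter.unusedSectionVars false

lemma meet_p {q : Point} (hq1 : R.Incid q l1) (hq2 : R.Incid q l2) : q = p := by
  by_contra h
  exact hne (lu R h hq1 hp1 hq2 hp2)

lemma oc_not_p {c : Line} (hc : c ∈ OC R l1 l2 p) : ¬R.Incid p c := by
  obtain ⟨-, a, b, ha1, hb2, hap, hbp, hac, hbc⟩ := hc
  intro hpc
  have hpa : p ≠ a := fun h => hap h.symm
  have hcl1 : c = l1 := lu R hpa hpc hac hp1 ha1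
  exact hbp (meet_p R h1 h2 hne hp1 hp2 (by rw [← hcl1]; exact hbc) hb2)

lemma cross_meet {c c' : Line} (hc : c ∈ OC R l1 l2 p) (hc' : c' ∈ OC R l1 l2 p)
    (hcc : c ≠ c') : ∃ q, R.Incid q c ∧ R.Incid q c' := by
  obtain ⟨hDc, a, b, ha1, hb2, hap, hbp, hac, hbc⟩ := hc
  obtain ⟨hDc', a', b', ha'1, hb'2, ha'p, hb'p, ha'c, hb'c⟩ := hc'
  by_cases haa : a = a'
  · exact ⟨a, hac, by rw [haa]; exact ha'c⟩
  by_cases hbb : b = b'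
  · exact ⟨b, hbc, by rw [hbb]; exact hb'c⟩
  have hab : a ≠ b := fun h => hap (meet_p R h1 h2 hne hp1 hp2 ha1 (by rw [h]; exact hb2))
  have hab' : a ≠ b' := fun h => hap (meet_p R h1 h2 hne hp1 hp2 ha1 (by rw [h]; exact hb'2))
  have ha'b : a' ≠ b := fun h => ha'p (meet_p R h1 h2 hne hp1 hp2 ha'1 (by rw [h]; exact hb2))
  have ha'b' : a' ≠ b' := fun h => ha'p (meet_p R h1 h2 hne hp1 hp2 ha'1 (by rw [h]; exact hb'2))
  exact R.A6 l1 l2 c c' p a a' b b' h1 h2 hne hp1 hp2 hcc ha1 hac ha'1 ha'c hb2 hbc hb'2 hb'c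
    haa hab hab' ha'b ha'b' hbb

lemma pencil_full {m : Line} (hDm : ¬R.Incid R.D m) (hpm : R.Incid p m)
    {x : Point} (hxp : x ≠ p) (hxm : R.Incid x m) (hxPS : x ∈ PS R l1 l2 p) :
    ∀ z, R.Incid z m → z ∈ PS R l1 l2 p := by
  intro z hzm
  by_cases hx1 : R.Incid x l1
  · have hml1 : m = l1 := lu R hxp hxm hpm hx1 hp1
    exact Or.inl (by rw [← hml1]; exact hzm)
  by_cases hx2 : R.Incid x l2
  · have hml2 : m = l2 := lu R hxp hxm hpm hx2 hp2
    exact Or.inr (Or.inl (by rw [← hml2]; exact hzm))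
  rcases hxPS with h | h | h | ⟨c, hc, hxc⟩
  · exact absurd h hx1
  · exact absurd h hx2
  · exact absurd (h ▸ hxm) hDm
  by_cases hz1 : R.Incid z l1
  · exact Or.inl hz1
  by_cases hz2 : R.Incid z l2
  · exact Or.inr (Or.inl hz2)
  by_cases hzc : R.Incid z c
  · exact Or.inr (Or.inr (Or.inr ⟨c, hc, hzc⟩))
  have hzp : z ≠ p := fun h => hz1 (h ▸ hp1)
  have hzD : z ≠ R.D := fun h => hDm (h ▸ hzm)
  have hc' := hc
  obtain ⟨hcD, a, b, ha1, hb2, hap, hbp, hac, hbc⟩ := hc'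
  have hab : a ≠ b := fun h => hap (meet_p R h1 h2 hne hp1 hp2 ha1 (by rw [h]; exact hb2))
  have hza : z ≠ a := fun h => hz1 (h ▸ ha1)
  have hzb : z ≠ b := fun h => hz2 (h ▸ hb2)
  obtain ⟨n, hzn, han⟩ := lineOf R hza
  obtain ⟨n', hzn', hbn'⟩ := lineOf R hzb
  have hcm : c ≠ m := fun h => oc_not_p R h1 h2 hne hp1 hp2 hc (by rw [h]; exact hpm)
  by_cases hDn : R.Incid R.D n
  · by_cases hDn' : R.Incid R.D n'
    · -- then n = n' = c, contradiction with z ∉ c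
      have hDz : R.D ≠ z := fun h => hzD h.symm
      have hnn' : n = n' := lu R hDz hDn hzn hDn' hzn'
      have hcn : c = n := lu R hab hac hbc han (by rw [hnn']; exact hbn')
      exact absurd (by rw [hcn]; exact hzn) hzc
    · -- use n' : line through z and b; A6 with L1 = c, L2 = m, L3 = l1, L4 = n'
      have hl1n' : l1 ≠ n' := fun h => hbp (meet_p R h1 h2 hne hp1 hp2 (by rw [h]; exact hbn') hb2)
      obtain ⟨q, hq1, hqn'⟩ := R.A6 c m l1 n' x a b p z hcD hDm hcm hxc hxm hl1n'
        hac ha1 hbc hbn' hpm hp1 hzm hzn'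
        hab hap (fun h => hza h.symm) hbp (fun h => hzb h.symm) (fun h => hzp h.symm)
      have hqp : q ≠ p := by
        intro h
        have hpn' : R.Incid p n' := by rw [← h]; exact hqn'
        have hn'm : n' = m := lu R hzp hzn' hpn' hzm hpm
        have hbm : R.Incid b m := by rw [← hn'm]; exact hbn'
        have hml2 : m = l2 := lu R hbp hbm hpm hb2 hp2
        exact hx2 (by rw [← hml2]; exact hxm)
      exact Or.inr (Or.inr (Or.inr ⟨n', ⟨hDn', q, b, hq1, hb2, hqp, hbp, hqn', hbn'⟩, hzn'⟩))
  · -- use n : line through z and a; A6 with L1 = c, L2 = m, L3 = l2, L4 = n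
    have hl2n : l2 ≠ n := fun h => hap (meet_p R h1 h2 hne hp1 hp2 ha1 (by rw [h]; exact han))
    obtain ⟨q, hq2, hqn⟩ := R.A6 c m l2 n x b a p z hcD hDm hcm hxc hxm hl2n
      hbc hb2 hac han hpm hp2 hzm hzn
      (fun h => hab h.symm) hbp (fun h => hzb h.symm) hap (fun h => hza h.symm)
      (fun h => hzp h.symm)
    have hqp : q ≠ p := by
      intro h
      have hpn : R.Incid p n := by rw [← h]; exact hqn
      have hnm : n = m := lu R hzp hzn hpn hzm hpm
      have ham' : R.Incid a m := by rw [← hnm]; exact han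
      have hml1 : m = l1 := lu R hap ham' hpm ha1 hp1
      exact hx1 (by rw [← hml1]; exact hxm)
    exact Or.inr (Or.inr (Or.inr ⟨n, ⟨hDn, a, q, ha1, hq2, hap, hqp, han, hqn⟩, hzn⟩))

lemma hl2_side1 {m : Line} (hDm : ¬R.Incid R.D m) (hpm : ¬R.Incid p m) (hm2 : m ≠ l2)
    {x y : Point} (hx1 : R.Incid x l1) (hxm : R.Incid x m) (hxy : x ≠ y)
    (hym : R.Incid y m) (hy2 : ¬R.Incid y l2)
    {c : Line} (hc : c ∈ OC R l1 l2 p) (hyc : R.Incid y c) : m ∈ OC R l1 l2 p := by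
  obtain ⟨hcD, a, b, ha1, hb2, hap, hbp, hac, hbc⟩ := hc
  have hc1 : l1 ≠ c := fun h => hbp (meet_p R h1 h2 hne hp1 hp2 (by rw [h]; exact hbc) hb2)
  have hxp : x ≠ p := fun h => hpm (h ▸ hxm)
  have hxb : x ≠ b := fun h => hbp (meet_p R h1 h2 hne hp1 hp2 (by rw [← h]; exact hx1) hb2)
  have hpy : p ≠ y := fun h => hpm (by rw [h]; exact hym)
  have hyb : y ≠ b := fun h => hy2 (by rw [h]; exact hb2)
  obtain ⟨q, hqm, hq2⟩ := R.A6 l1 c m l2 a x p y b h1 hcD hc1 ha1 hac hm2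
    hx1 hxm hp1 hp2 hyc hym hbc hb2 hxp hxy hxb hpy (fun h => hbp h.symm) hyb
  have hqp : q ≠ p := fun h => hpm (h ▸ hqm)
  exact ⟨hDm, x, q, hx1, hq2, hxp, hqp, hxm, hqm⟩

lemma hl2_side2 {m : Line} (hDm : ¬R.Incid R.D m) (hpm : ¬R.Incid p m) (hm1 : m ≠ l1)
    {x y : Point} (hx2 : R.Incid x l2) (hxm : R.Incid x m) (hxy : x ≠ y)
    (hym : R.Incid y m) (hy1 : ¬R.Incid y l1)
    {c : Line} (hc : c ∈ OC R l1 l2 p) (hyc : R.Incid y c) : m ∈ OC R l1 l2 p := by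
  obtain ⟨hcD, a, b, ha1, hb2, hap, hbp, hac, hbc⟩ := hc
  have hc2 : l2 ≠ c := fun h => hap (meet_p R h1 h2 hne hp1 hp2 ha1 (by rw [h]; exact hac))
  have hxp : x ≠ p := fun h => hpm (h ▸ hxm)
  have hxa : x ≠ a := fun h => hap (meet_p R h1 h2 hne hp1 hp2 ha1 (by rw [← h]; exact hx2))
  have hpy : p ≠ y := fun h => hpm (by rw [h]; exact hym)
  have hya : y ≠ a := fun h => hy1 (by rw [h]; exact ha1)
  obtain ⟨q, hqm, hq1⟩ := R.A6 l2 c m l1 b x p y a h2 hcD hc2 hb2 hbc hm1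
    hx2 hxm hp2 hp1 hyc hym hac ha1 hxp hxy hxa hpy (fun h => hap h.symm) hya
  have hqp : q ≠ p := fun h => hpm (h ▸ hqm)
  exact ⟨hDm, q, x, hq1, hx2, hqp, hxp, hqm, hxm⟩

lemma psElim {m : Line} (hDm : ¬R.Incid R.D m) {x : Point} (hxm : R.Incid x m)
    (hx : x ∈ PS R l1 l2 p) :
    R.Incid x l1 ∨ R.Incid x l2 ∨
      (¬R.Incid x l1 ∧ ¬R.Incid x l2 ∧ ∃ c ∈ OC R l1 l2 p, R.Incid x c) := by
  by_cases hx1 : R.Incid x l1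
  · exact Or.inl hx1
  by_cases hx2 : R.Incid x l2
  · exact Or.inr (Or.inl hx2)
  rcases hx with h | h | h | ⟨c, hc, hxc⟩
  · exact absurd h hx1
  · exact absurd h hx2
  · exact absurd (h ▸ hxm) hDm
  · exact Or.inr (Or.inr ⟨hx1, hx2, c, hc, hxc⟩)

lemma hl2 {m : Line} (hDm : ¬R.Incid R.D m) (hpm : ¬R.Incid p m) (hm1 : m ≠ l1) (hm2 : m ≠ l2)
    {x y : Point} (hxy : x ≠ y) (hxm : R.Incid x m) (hym : R.Incid y m)
    (hx : x ∈ PS R l1 l2 p) (hy : y ∈ PS R l1 l2 p) : m ∈ OC R l1 l2 p := by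
  have hxp : x ≠ p := fun h => hpm (h ▸ hxm)
  have hyp : y ≠ p := fun h => hpm (h ▸ hym)
  rcases psElim R h1 h2 hne hp1 hp2 hDm hxm hx with hx1 | hx2 | ⟨hx1, hx2, cx, hcx, hxcx⟩
  · rcases psElim R h1 h2 hne hp1 hp2 hDm hym hy with hy1 | hy2 | ⟨hy1, hy2, cy, hcy, hycy⟩
    · exact absurd (lu R hxy hxm hym hx1 hy1) hm1
    · exact ⟨hDm, x, y, hx1, hy2, hxp, hyp, hxm, hym⟩
    · exact hl2_side1 R h1 h2 hne hp1 hp2 hDm hpm hm2 hx1 hxm hxy hym hy2 hcy hycy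
  · rcases psElim R h1 h2 hne hp1 hp2 hDm hym hy with hy1 | hy2 | ⟨hy1, hy2, cy, hcy, hycy⟩
    · exact ⟨hDm, y, x, hy1, hx2, hyp, hxp, hym, hxm⟩
    · exact absurd (lu R hxy hxm hym hx2 hy2) hm2
    · exact hl2_side2 R h1 h2 hne hp1 hp2 hDm hpm hm1 hx2 hxm hxy hym hy1 hcy hycy
  · rcases psElim R h1 h2 hne hp1 hp2 hDm hym hy with hy1 | hy2 | ⟨hy1, hy2, cy, hcy, hycy⟩
    · exact hl2_side1 R h1 h2 hne hp1 hp2 hDm hpm hm2 hy1 hym (fun h => hxy h.symm) hxm hx2 hcx hxcx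
    · exact hl2_side2 R h1 h2 hne hp1 hp2 hDm hpm hm1 hy2 hym (fun h => hxy h.symm) hxm hx1 hcx hxcx
    · by_cases hycx : R.Incid y cx
      · have : m = cx := lu R hxy hxm hym hxcx hycx
        rw [this]; exact hcx
      have hcc : cx ≠ cy := fun h => hycx (by rw [h]; exact hycy)
      obtain ⟨w, hwcx, hwcy⟩ := cross_meet R h1 h2 hne hp1 hp2 hcx hcy hcc
      have hcx0 := hcx
      obtain ⟨hDcx, a, b, ha1, hb2, hap, hbp, hacx, hbcx⟩ := hcx0
      have hcy0 := hcy
      obtain ⟨hDcy, a', b', ha'1, hb'2, ha'p, hb'p, ha'cy, hb'cy⟩ := hcy0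
      have hab : a ≠ b := fun h => hap (meet_p R h1 h2 hne hp1 hp2 ha1 (by rw [h]; exact hb2))
      by_cases haa : a = a'
      · have hbb : b ≠ b' := by
          intro h
          exact hcc (lu R hab hacx hbcx (by rw [haa]; exact ha'cy) (by rw [h]; exact hb'cy))
        obtain ⟨q, hqm, hq2⟩ := R.A6 cx cy m l2 w x b y b' hDcx hDcy hcc hwcx hwcy hm2
          hxcx hxm hbcx hb2 hycy hym hb'cy hb'2
          (fun h => hx2 (by rw [h]; exact hb2)) hxy (fun h => hx2 (by rw [h]; exact hb'2))
          (fun h => hy2 (by rw [← h]; exact hb2)) hbb (fun h => hy2 (by rw [h]; exact hb'2))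
        exact hl2_side2 R h1 h2 hne hp1 hp2 hDm hpm hm1 hq2 hqm
          (fun h => hx2 (by rw [← h]; exact hq2)) hxm hx1 hcx hxcx
      · obtain ⟨q, hqm, hq1⟩ := R.A6 cx cy m l1 w x a y a' hDcx hDcy hcc hwcx hwcy hm1
          hxcx hxm hacx ha1 hycy hym ha'cy ha'1
          (fun h => hx1 (by rw [h]; exact ha1)) hxy (fun h => hx1 (by rw [h]; exact ha'1))
          (fun h => hy1 (by rw [← h]; exact ha1)) haa (fun h => hy1 (by rw [h]; exact ha'1))
        exact hl2_side1 R h1 h2 hne hp1 hp2 hDm hpm hm2 hq1 hqm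
          (fun h => hx1 (by rw [← h]; exact hq1)) hxm hx2 hcx hxcx

lemma hl4 {c m : Line} (hc : c ∈ OC R l1 l2 p) (hDm : ¬R.Incid R.D m) (hpm : R.Incid p m)
    {x : Point} (hxp : x ≠ p) (hxm : R.Incid x m) (hxPS : x ∈ PS R l1 l2 p) :
    ∃ q, R.Incid q c ∧ R.Incid q m := by
  have hc0 := hc
  obtain ⟨hDc, a, b, ha1, hb2, hap, hbp, hac, hbc⟩ := hc0
  have hab : a ≠ b := fun h => hap (meet_p R h1 h2 hne hp1 hp2 ha1 (by rw [h]; exact hb2))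
  by_cases hx1 : R.Incid x l1
  · have : m = l1 := lu R hxp hxm hpm hx1 hp1
    exact ⟨a, hac, by rw [this]; exact ha1⟩
  by_cases hx2 : R.Incid x l2
  · have : m = l2 := lu R hxp hxm hpm hx2 hp2
    exact ⟨b, hbc, by rw [this]; exact hb2⟩
  by_cases hxc : R.Incid x c
  · exact ⟨x, hxc, hxm⟩
  rcases hxPS with h | h | h | ⟨cx, hcx, hxcx⟩
  · exact absurd h hx1
  · exact absurd h hx2
  · exact absurd (h ▸ hxm) hDm
  have hccx : c ≠ cx := fun h => hxc (by rw [h]; exact hxcx)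
  obtain ⟨w, hwc, hwcx⟩ := cross_meet R h1 h2 hne hp1 hp2 hc hcx hccx
  have hcx0 := hcx
  obtain ⟨hDcx, ax, bx, hax1, hbx2, haxp, hbxp, haxcx, hbxcx⟩ := hcx0
  have hcm : c ≠ m := fun h => oc_not_p R h1 h2 hne hp1 hp2 hc (by rw [h]; exact hpm)
  have hpw : p ≠ w := fun h => oc_not_p R h1 h2 hne hp1 hp2 hc (by rw [h]; exact hwc)
  have hwx : w ≠ x := fun h => hxc (by rw [← h]; exact hwc)
  by_cases hwa : w = a
  · have hl2cx : l2 ≠ cx :=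
      fun h => haxp (meet_p R h1 h2 hne hp1 hp2 hax1 (by rw [h]; exact haxcx))
    exact R.A6 l2 cx c m bx b p w x h2 hDcx hl2cx hbx2 hbxcx hcm hb2 hbc hp2 hpm hwcx hwc hxcx hxm
      hbp (fun h => hab ((h.trans hwa).symm)) (fun h => hx2 (by rw [← h]; exact hb2))
      hpw (fun h => hxp h.symm) hwx
  · have hl1cx : l1 ≠ cx :=
      fun h => hbxp (meet_p R h1 h2 hne hp1 hp2 (by rw [h]; exact hbxcx) hbx2)
    exact R.A6 l1 cx c m ax a p w x h1 hDcx hl1cx hax1 haxcx hcm ha1 hac hp1 hpm hwcx hwc hxcx hxm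
      hap (fun h => hwa h.symm) (fun h => hx1 (by rw [← h]; exact ha1))
      hpw (fun h => hxp h.symm) hwx

lemma full_LS : R.IsFull (PS R l1 l2 p) (LS R l1 l2 p) := by
  intro l hl hDl z hzl
  rcases hl with rfl | rfl | hD | hOC | ⟨hD', hpl, x, hxp, hxl, hxPS⟩
  · exact Or.inl hzl
  · exact Or.inr (Or.inl hzl)
  · exact absurd hD hDl
  · exact Or.inr (Or.inr (Or.inr ⟨l, hOC, hzl⟩))
  · exact pencil_full R h1 h2 hne hp1 hp2 hD' hpl hxp hxl hxPS z hzl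

lemma hwit : ∀ l, l ∈ LS R l1 l2 p → ¬R.Incid R.D l → R.Incid p l →
    ∃ x, x ≠ p ∧ R.Incid x l ∧ x ∈ PS R l1 l2 p := by
  intro l hl hDl hpl
  rcases hl with heq | heq | hD | hOC | ⟨-, -, x, hxp, hxl, hxPS⟩
  · obtain ⟨x, y, -, hxp, -, hx, -⟩ := three R l1 p
    exact ⟨x, hxp, by rw [heq]; exact hx, Or.inl hx⟩
  · obtain ⟨x, y, -, hxp, -, hx, -⟩ := three R l2 p
    exact ⟨x, hxp, by rw [heq]; exact hx, Or.inr (Or.inl hx)⟩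
  · exact absurd hD hDl
  · exact absurd hpl (oc_not_p R h1 h2 hne hp1 hp2 hOC)
  · exact ⟨x, hxp, hxl, hxPS⟩

lemma hcase : ∀ l, l ∈ LS R l1 l2 p → ¬R.Incid R.D l → R.Incid p l ∨ l ∈ OC R l1 l2 p := by
  intro l hl hDl
  rcases hl with rfl | rfl | hD | hOC | ⟨-, hpl, -⟩
  · exact Or.inl hp1
  · exact Or.inl hp2
  · exact absurd hD hDl
  · exact Or.inr hOC
  · exact Or.inl hpl

lemma sub_LS : R.IsSubplane (PS R l1 l2 p) (LS R l1 l2 p) := by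
  refine ⟨?_, ?_, ?_⟩
  · intro x y hx hy hxy
    obtain ⟨m, hxm, hym⟩ := lineOf R hxy
    have hmLS : m ∈ LS R l1 l2 p := by
      by_cases hDm : R.Incid R.D m
      · exact Or.inr (Or.inr (Or.inl hDm))
      by_cases hm1 : m = l1
      · exact Or.inl hm1
      by_cases hm2 : m = l2
      · exact Or.inr (Or.inl hm2)
      by_cases hpm : R.Incid p m
      · refine Or.inr (Or.inr (Or.inr (Or.inr ⟨hDm, hpm, ?_⟩)))
        by_cases hxp : x = p
        · exact ⟨y, fun h => hxy (hxp.trans h.symm), hym, hy⟩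
        · exact ⟨x, hxp, hxm, hx⟩
      · exact Or.inr (Or.inr (Or.inr (Or.inl
          (hl2 R h1 h2 hne hp1 hp2 hDm hpm hm1 hm2 hxy hxm hym hx hy))))
    exact ⟨m, ⟨hmLS, hxm, hym⟩, fun l' hl' => lu R hxy hl'.2.1 hl'.2.2 hxm hym⟩
  · intro l m hl hm hlm
    by_cases hDl : R.Incid R.D l
    · by_cases hDm : R.Incid R.D m
      · exact ⟨R.D, Or.inr (Or.inr (Or.inl rfl)), hDl, hDm⟩
      · obtain ⟨q, hql, hqm⟩ := smeet R hDl (Ne.symm hlm)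
        exact ⟨q, full_LS R h1 h2 hne hp1 hp2 m hm hDm q hqm, hql, hqm⟩
    by_cases hDm : R.Incid R.D m
    · obtain ⟨q, hqm, hql⟩ := smeet R hDm hlm
      exact ⟨q, full_LS R h1 h2 hne hp1 hp2 l hl hDl q hql, hql, hqm⟩
    rcases hcase R h1 h2 hne hp1 hp2 l hl hDl with hpl | hOCl
    · rcases hcase R h1 h2 hne hp1 hp2 m hm hDm with hpm | hOCm
      · exact ⟨p, Or.inl hp1, hpl, hpm⟩
      · obtain ⟨x, hxp, hxl, hxPS⟩ := hwit R h1 h2 hne hp1 hp2 l hl hDl hpl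
        obtain ⟨q, hqm, hql⟩ := hl4 R h1 h2 hne hp1 hp2 hOCm hDl hpl hxp hxl hxPS
        exact ⟨q, Or.inr (Or.inr (Or.inr ⟨m, hOCm, hqm⟩)), hql, hqm⟩
    · rcases hcase R h1 h2 hne hp1 hp2 m hm hDm with hpm | hOCm
      · obtain ⟨x, hxp, hxm, hxPS⟩ := hwit R h1 h2 hne hp1 hp2 m hm hDm hpm
        obtain ⟨q, hql, hqm⟩ := hl4 R h1 h2 hne hp1 hp2 hOCl hDm hpm hxp hxm hxPS
        exact ⟨q, Or.inr (Or.inr (Or.inr ⟨l, hOCl, hql⟩)), hql, hqm⟩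
      · obtain ⟨q, hql, hqm⟩ := cross_meet R h1 h2 hne hp1 hp2 hOCl hOCm hlm
        exact ⟨q, Or.inr (Or.inr (Or.inr ⟨l, hOCl, hql⟩)), hql, hqm⟩
  · obtain ⟨a, a', haa, hap, ha'p, ha1, ha'1⟩ := three R l1 p
    obtain ⟨b, b', hbb, hbp, hb'p, hb2, hb'2⟩ := three R l2 p
    have hab : a ≠ b := fun h => hap (meet_p R h1 h2 hne hp1 hp2 ha1 (by rw [h]; exact hb2))
    have hab' : a ≠ b' := fun h => hap (meet_p R h1 h2 hne hp1 hp2 ha1 (by rw [h]; exact hb'2))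
    have ha'b : a' ≠ b := fun h => ha'p (meet_p R h1 h2 hne hp1 hp2 ha'1 (by rw [h]; exact hb2))
    have ha'b' : a' ≠ b' := fun h => ha'p (meet_p R h1 h2 hne hp1 hp2 ha'1 (by rw [h]; exact hb'2))
    refine ⟨a, a', b, b', Or.inl ha1, Or.inl ha'1, Or.inr (Or.inl hb2), Or.inr (Or.inl hb'2),
      haa, hab, hab', ha'b, ha'b', hbb, ?_, ?_, ?_, ?_⟩
    · rintro l - ⟨hal, ha'l, hbl⟩
      have : l = l1 := lu R haa hal ha'l ha1 ha'1
      exact hbp (meet_p R h1 h2 hne hp1 hp2 (by rw [← this]; exact hbl) hb2)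
    · rintro l - ⟨hal, ha'l, hb'l⟩
      have : l = l1 := lu R haa hal ha'l ha1 ha'1
      exact hb'p (meet_p R h1 h2 hne hp1 hp2 (by rw [← this]; exact hb'l) hb'2)
    · rintro l - ⟨hal, hbl, hb'l⟩
      have : l = l2 := lu R hbb hbl hb'l hb2 hb'2
      exact hap (meet_p R h1 h2 hne hp1 hp2 ha1 (by rw [← this]; exact hal))
    · rintro l - ⟨ha'l, hbl, hb'l⟩
      have : l = l2 := lu R hbb hbl hb'l hb2 hb'2
      exact ha'p (meet_p R h1 h2 hne hp1 hp2 ha'1 (by rw [← this]; exact ha'l))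

lemma unique_plane {P' : Set Point} {L' : Set Line}
    (hsub : R.IsSubplane P' L') (hfull : R.IsFull P' L') (hl1 : l1 ∈ L') (hl2 : l2 ∈ L') :
    P' = PS R l1 l2 p ∧ L' = LS R l1 l2 p := by
  obtain ⟨ax1, ax2, -⟩ := hsub
  have hPl1 : ∀ z, R.Incid z l1 → z ∈ P' := fun z hz => hfull l1 hl1 h1 z hz
  have hPl2 : ∀ z, R.Incid z l2 → z ∈ P' := fun z hz => hfull l2 hl2 h2 z hz
  have key : ∀ (u v : Point) (m : Line), u ∈ P' → v ∈ P' → u ≠ v →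
      R.Incid u m → R.Incid v m → m ∈ L' := by
    intro u v m hu hv huv hum hvm
    obtain ⟨n, ⟨hnL, hun, hvn⟩, -⟩ := ax1 u v hu hv huv
    have : m = n := lu R huv hum hvm hun hvn
    rw [this]; exact hnL
  obtain ⟨a, a', haa, hap, ha'p, ha1, ha'1⟩ := three R l1 p
  have specL : ∀ (u : Point) (s : Line), R.Incid u l1 → u ≠ p →
      R.Incid R.D s → R.Incid u s → s ∈ L' := by
    intro u s hu1 hup hDs hus
    have hsl2 : l2 ≠ s := fun h => h2 (by rw [h]; exact hDs)
    obtain ⟨v, hvs, hv2⟩ := smeet R hDs hsl2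
    have hvp : v ≠ p := by
      intro h
      have hps : R.Incid p s := by rw [← h]; exact hvs
      have hpu : p ≠ u := fun h' => hup h'.symm
      have hs1 : s = l1 := lu R hpu hps hus hp1 hu1
      exact h1 (by rw [← hs1]; exact hDs)
    have huv : u ≠ v := fun h => hup (meet_p R h1 h2 hne hp1 hp2 hu1 (by rw [h]; exact hv2))
    exact key u v s (hPl1 u hu1) (hPl2 v hv2) huv hus hvs
  have hDa : R.D ≠ a := fun h => h1 (h ▸ ha1)
  have hDa' : R.D ≠ a' := fun h => h1 (h ▸ ha'1)
  obtain ⟨s, hDs, has⟩ := lineOf R hDa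
  obtain ⟨s', hDs', ha's'⟩ := lineOf R hDa'
  have hsL : s ∈ L' := specL a s ha1 hap hDs has
  have hs'L : s' ∈ L' := specL a' s' ha'1 ha'p hDs' ha's'
  have hss' : s ≠ s' := by
    intro h
    have hs1 : s = l1 := lu R haa has (by rw [h]; exact ha's') ha1 ha'1
    exact h1 (by rw [← hs1]; exact hDs)
  obtain ⟨w, hwP, hws, hws'⟩ := ax2 s s' hsL hs'L hss'
  have hwD : w = R.D := (R.A5 s s' hDs (Ne.symm hss')).unique ⟨hws, hws'⟩ ⟨hDs, hDs'⟩
  have hDP : R.D ∈ P' := by rw [← hwD]; exact hwP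
  have hspec : ∀ t, R.Incid R.D t → t ∈ L' := by
    intro t hDt
    have htl1 : l1 ≠ t := fun h => h1 (by rw [h]; exact hDt)
    obtain ⟨u, hut, hu1⟩ := smeet R hDt htl1
    have huD : R.D ≠ u := fun h => h1 (by rw [h]; exact hu1)
    exact key R.D u t hDP (hPl1 u hu1) huD hDt hut
  have hOCL : ∀ c, c ∈ OC R l1 l2 p → c ∈ L' := by
    intro c hc
    obtain ⟨hDc, u, v, hu1, hv2, hup, hvp, huc, hvc⟩ := hc
    have huv : u ≠ v := fun h => hup (meet_p R h1 h2 hne hp1 hp2 hu1 (by rw [h]; exact hv2))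
    exact key u v c (hPl1 u hu1) (hPl2 v hv2) huv huc hvc
  have hPSsub : PS R l1 l2 p ⊆ P' := by
    intro x hx
    rcases hx with h | h | h | ⟨c, hc, hxc⟩
    · exact hPl1 x h
    · exact hPl2 x h
    · rw [h]; exact hDP
    · exact hfull c (hOCL c hc) hc.1 x hxc
  have hPsub : P' ⊆ PS R l1 l2 p := by
    intro x hx
    by_cases hx1 : R.Incid x l1
    · exact Or.inl hx1
    by_cases hx2 : R.Incid x l2
    · exact Or.inr (Or.inl hx2)
    by_cases hxD : x = R.D
    · exact Or.inr (Or.inr (Or.inl hxD))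
    have main : ∀ (u : Point) (mu : Line), R.Incid u l1 → u ≠ p → R.Incid x mu →
        R.Incid u mu → ¬R.Incid R.D mu → x ∈ PS R l1 l2 p := by
      intro u mu hu1 hup hxmu humu hDmu
      have hxu : x ≠ u := fun h => hx1 (h ▸ hu1)
      have hpmu : ¬R.Incid p mu := by
        intro hpmu
        have hmu1 : mu = l1 := lu R hup humu hpmu hu1 hp1
        exact hx1 (by rw [← hmu1]; exact hxmu)
      have hmuL : mu ∈ L' := key x u mu hx (hPl1 u hu1) hxu hxmu humu
      have hmul2 : mu ≠ l2 := fun h => hx2 (by rw [← h]; exact hxmu)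
      obtain ⟨v, hvP, hvmu, hv2⟩ := ax2 mu l2 hmuL hl2 hmul2
      have hvp : v ≠ p := fun h => hpmu (h ▸ hvmu)
      exact Or.inr (Or.inr (Or.inr ⟨mu, ⟨hDmu, u, v, hu1, hv2, hup, hvp, humu, hvmu⟩, hxmu⟩))
    have hxa : x ≠ a := fun h => hx1 (h ▸ ha1)
    have hxa' : x ≠ a' := fun h => hx1 (h ▸ ha'1)
    obtain ⟨ma, hxma, hama⟩ := lineOf R hxa
    obtain ⟨ma', hxma', ha'ma'⟩ := lineOf R hxa'
    by_cases hDma : R.Incid R.D ma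
    · have hDma' : ¬R.Incid R.D ma' := by
        intro hDma'
        have hDx : R.D ≠ x := fun h => hxD h.symm
        have hmm : ma = ma' := lu R hDx hDma hxma hDma' hxma'
        have hma1 : ma = l1 := lu R haa hama (by rw [hmm]; exact ha'ma') ha1 ha'1
        exact h1 (by rw [← hma1]; exact hDma)
      exact main a' ma' ha'1 ha'p hxma' ha'ma' hDma'
    · exact main a ma ha1 hap hxma hama hDma
  have hPeq : P' = PS R l1 l2 p := Set.Subset.antisymm hPsub hPSsub
  refine ⟨hPeq, Set.Subset.antisymm ?_ ?_⟩
  · intro l hl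
    by_cases hDl : R.Incid R.D l
    · exact Or.inr (Or.inr (Or.inl hDl))
    by_cases hpl : R.Incid p l
    · refine Or.inr (Or.inr (Or.inr (Or.inr ⟨hDl, hpl, ?_⟩)))
      obtain ⟨u, v, -, hup, -, hul, -⟩ := three R l p
      have huPS : u ∈ PS R l1 l2 p := by rw [← hPeq]; exact hfull l hl hDl u hul
      exact ⟨u, hup, hul, huPS⟩
    · have hll1 : l ≠ l1 := fun h => hpl (by rw [h]; exact hp1)
      have hll2 : l ≠ l2 := fun h => hpl (by rw [h]; exact hp2)
      obtain ⟨u, hiuP, hul, hu1⟩ := ax2 l l1 hl hl1 hll1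
      obtain ⟨v, hivP, hvl, hv2⟩ := ax2 l l2 hl hl2 hll2
      have hup : u ≠ p := fun h => hpl (h ▸ hul)
      have hvp : v ≠ p := fun h => hpl (h ▸ hvl)
      exact Or.inr (Or.inr (Or.inr (Or.inl ⟨hDl, u, v, hu1, hv2, hup, hvp, hul, hvl⟩)))
  · intro l hl
    rcases hl with heq | heq | hD | hOC | ⟨hDl, hpl, x, hxp, hxl, hxPS⟩
    · rw [heq]; exact hl1
    · rw [heq]; exact hl2
    · exact hspec l hD
    · exact hOCL l hOC
    · exact key p x l (hPl1 p hp1) (hPSsub hxPS) (fun h => hxp h.symm) hpl hxl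

end ctx

end PR9

/-- Two intersecting ordinary lines lie in a unique full projective subplane. -/
theorem stmt_9 {Point Line : Type} (R : ProjRect Point Line) (l1 l2 : Line)
    (h1 : ¬R.Incid R.D l1) (h2 : ¬R.Incid R.D l2) (hne : l1 ≠ l2)
    (p : Point) (hp1 : R.Incid p l1) (hp2 : R.Incid p l2) :
    ∃! π : Set Point × Set Line,
      R.IsSubplane π.1 π.2 ∧ R.IsFull π.1 π.2 ∧ l1 ∈ π.2 ∧ l2 ∈ π.2 := by
  refine ⟨(PR9.PS R l1 l2 p, PR9.LS R l1 l2 p),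
    ⟨PR9.sub_LS R h1 h2 hne hp1 hp2, PR9.full_LS R h1 h2 hne hp1 hp2,
      Or.inl rfl, Or.inr (Or.inl rfl)⟩, ?_⟩
  rintro ⟨P', L'⟩ ⟨hsub, hfull, hm1, hm2⟩
  obtain ⟨hP, hL⟩ := PR9.unique_plane R h1 h2 hne hp1 hp2 hsub hfull hm1 hm2
  exact Prod.ext hP hL
end

section
/- In a projective rectangle, given three noncollinear ordinary points, there is a unique full projective subplane containing all three points. -/
namespace PRAux

variable {Point Line : Type}

open Classical

lemma uniq_line (R : ProjRect Point Line) {p q : Point} (h : p ≠ q) {e f : Line}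
    (h1 : R.Incid p e) (h2 : R.Incid q e) (h3 : R.Incid p f) (h4 : R.Incid q f) : e = f := by
  obtain ⟨g, _, hg⟩ := R.A1 p q h
  rw [hg e ⟨h1, h2⟩, hg f ⟨h3, h4⟩]

lemma uniq_pt (R : ProjRect Point Line) {e f : Line} (h : e ≠ f) {p q : Point}
    (h1 : R.Incid p e) (h2 : R.Incid p f) (h3 : R.Incid q e) (h4 : R.Incid q f) : p = q := by
  by_contra hpq
  exact h (uniq_line R hpq h1 h3 h2 h4)

lemma line_exists (R : ProjRect Point Line) {p q : Point} (h : p ≠ q) :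
    ∃ e : Line, R.Incid p e ∧ R.Incid q e := (R.A1 p q h).exists

/-- among three distinct elements, with two "subsingleton" bad predicates,
some element avoids both. -/
lemma pick3 {α : Type} {p q r : α} (hpq : p ≠ q) (hpr : p ≠ r) (hqr : q ≠ r)
    {B1 B2 : α → Prop} (h1 : ∀ x y, B1 x → B1 y → x = y) (h2 : ∀ x y, B2 x → B2 y → x = y) :
    (¬B1 p ∧ ¬B2 p) ∨ (¬B1 q ∧ ¬B2 q) ∨ (¬B1 r ∧ ¬B2 r) := by
  by_contra h
  push_neg at h
  obtain ⟨hp, hq, hr⟩ := h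
  have Hp : B1 p ∨ B2 p := or_iff_not_imp_left.mpr hp
  have Hq : B1 q ∨ B2 q := or_iff_not_imp_left.mpr hq
  have Hr : B1 r ∨ B2 r := or_iff_not_imp_left.mpr hr
  rcases Hp with hP | hP <;> rcases Hq with hQ | hQ <;> rcases Hr with hR | hR
  · exact hpq (h1 _ _ hP hQ)
  · exact hpq (h1 _ _ hP hQ)
  · exact hpr (h1 _ _ hP hR)
  · exact hqr (h2 _ _ hQ hR)
  · exact hqr (h1 _ _ hQ hR)
  · exact hpr (h2 _ _ hP hR)
  · exact hpq (h2 _ _ hP hQ)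
  · exact hpq (h2 _ _ hP hQ)

/-- among three distinct elements and one subsingleton bad predicate, two distinct
elements avoid it. -/
lemma pick2 {α : Type} {p q r : α} (hpq : p ≠ q) (hpr : p ≠ r) (hqr : q ≠ r)
    {B : α → Prop} (h1 : ∀ x y, B x → B y → x = y) :
    ∃ x y, x ≠ y ∧ ¬B x ∧ ¬B y ∧ (x = p ∨ x = q ∨ x = r) ∧ (y = p ∨ y = q ∨ y = r) := by
  by_cases hp : B p
  · exact ⟨q, r, hqr, fun h => hpq (h1 _ _ hp h), fun h => hpr (h1 _ _ hp h), by tauto, by tauto⟩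
  · by_cases hq : B q
    · exact ⟨p, r, hpr, hp, fun h => hqr (h1 _ _ hq h), by tauto, by tauto⟩
    · exact ⟨p, q, hpq, hp, hq, by tauto, by tauto⟩

/-- Hypotheses: two distinct ordinary lines `l`, `m` through `c`. -/
structure Setup (R : ProjRect Point Line) (l m : Line) (c : Point) : Prop where
  hcl : R.Incid c l
  hcm : R.Incid c m
  hlm : l ≠ m
  hlD : ¬R.Incid R.D l
  hmD : ¬R.Incid R.D m

lemma Setup.symm {R : ProjRect Point Line} {l m : Line} {c : Point} (S : Setup R l m c) :
    Setup R m l c := ⟨S.hcm, S.hcl, S.hlm.symm, S.hmD, S.hlD⟩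

lemma Setup.only_c {R : ProjRect Point Line} {l m : Line} {c : Point} (S : Setup R l m c)
    {p : Point} (hp : R.Incid p l) (hq : R.Incid p m) : p = c :=
  uniq_pt R S.hlm hp hq S.hcl S.hcm

/-- transversal lines of the pair (l, m). -/
def IsTrans (R : ProjRect Point Line) (l m : Line) (c : Point) (n : Line) : Prop :=
  ∃ x y, R.Incid x l ∧ R.Incid x n ∧ R.Incid y m ∧ R.Incid y n ∧ x ≠ c ∧ y ≠ c ∧ x ≠ y

/-- the point set of the generated full subplane. -/
def PP (R : ProjRect Point Line) (l m : Line) (c : Point) : Set Point :=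
  {q | q = c ∨ q = R.D ∨ ∃ n, IsTrans R l m c n ∧ ¬R.Incid R.D n ∧ R.Incid q n}

/-- the line set of the generated full subplane. -/
def LL (R : ProjRect Point Line) (l m : Line) (c : Point) : Set Line :=
  {e | IsTrans R l m c e ∨ (R.Incid c e ∧ ∃ z, z ∈ PP R l m c ∧ z ≠ c ∧ R.Incid z e)}

lemma IsTrans.symm {R : ProjRect Point Line} {l m : Line} {c : Point} {n : Line}
    (h : IsTrans R l m c n) : IsTrans R m l c n := by
  obtain ⟨x, y, h1, h2, h3, h4, h5, h6, h7⟩ := h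
  exact ⟨y, x, h3, h4, h1, h2, h6, h5, h7.symm⟩

lemma PP_symm (R : ProjRect Point Line) (l m : Line) (c : Point) :
    PP R m l c = PP R l m c := by
  ext q
  simp only [PP, Set.mem_setOf_eq]
  constructor <;>
    (rintro (h | h | ⟨n, h1, h2, h3⟩)
     · exact Or.inl h
     · exact Or.inr (Or.inl h)
     · exact Or.inr (Or.inr ⟨n, h1.symm, h2, h3⟩))

end PRAux

namespace PRAux

variable {Point Line : Type} {R : ProjRect Point Line} {l m : Line} {c : Point}

lemma trans_ne_l (S : Setup R l m c) {n : Line} (h : IsTrans R l m c n) : n ≠ l := by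
  obtain ⟨x, y, h1, h2, h3, h4, h5, h6, h7⟩ := h
  rintro rfl
  exact h6 (S.only_c h4 h3)

lemma trans_ne_m (S : Setup R l m c) {n : Line} (h : IsTrans R l m c n) : n ≠ m :=
  trans_ne_l S.symm h.symm

lemma trans_not_c (S : Setup R l m c) {n : Line} (h : IsTrans R l m c n) :
    ¬R.Incid c n := by
  intro hc
  obtain ⟨x, y, h1, h2, h3, h4, h5, h6, h7⟩ := h
  exact h5 (uniq_pt R (trans_ne_l S ⟨x, y, h1, h2, h3, h4, h5, h6, h7⟩) h2 h1 hc S.hcl)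

/-- every special line missing `c` is a transversal. -/
lemma special_trans (S : Setup R l m c) {e : Line} (hD : R.Incid R.D e)
    (hc : ¬R.Incid c e) : IsTrans R l m c e := by
  obtain ⟨x, hx, _⟩ := R.A5 e l hD (fun h => S.hlD (h ▸ hD))
  obtain ⟨y, hy, _⟩ := R.A5 e m hD (fun h => S.hmD (h ▸ hD))
  refine ⟨x, y, hx.2, hx.1, hy.2, hy.1, ?_, ?_, ?_⟩
  · rintro rfl; exact hc hx.1
  · rintro rfl; exact hc hy.1
  · rintro rfl; exact hc (S.only_c hx.2 hy.2 ▸ hx.1)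

lemma c_mem_PP : c ∈ PP R l m c := Or.inl rfl

lemma D_mem_PP : R.D ∈ PP R l m c := Or.inr (Or.inl rfl)

/-- every point of `l` lies in the subplane. -/
lemma l_mem_PP (S : Setup R l m c) {q : Point} (hq : R.Incid q l) : q ∈ PP R l m c := by
  by_cases hqc : q = c
  · exact hqc ▸ c_mem_PP
  have hqD : q ≠ R.D := by rintro rfl; exact S.hlD hq
  obtain ⟨sq, hqs, hDs⟩ := line_exists R hqD
  have hsm : sq ≠ m := by rintro rfl; exact S.hmD hDs
  obtain ⟨a, b, d, hab, had, hbd, ha, hb, hd⟩ := R.A3 m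
  have key := pick3 hab had hbd (B1 := fun z => z = c)
    (B2 := fun z => R.Incid z m ∧ R.Incid z sq)
    (fun x y hx hy => hx.trans hy.symm)
    (fun x y hx hy => uniq_pt R hsm hx.2 hx.1 hy.2 hy.1)
  have : ∃ y, R.Incid y m ∧ y ≠ c ∧ ¬R.Incid y sq := by
    rcases key with ⟨h1, h2⟩ | ⟨h1, h2⟩ | ⟨h1, h2⟩
    · exact ⟨a, ha, h1, fun h => h2 ⟨ha, h⟩⟩
    · exact ⟨b, hb, h1, fun h => h2 ⟨hb, h⟩⟩
    · exact ⟨d, hd, h1, fun h => h2 ⟨hd, h⟩⟩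
  obtain ⟨y, hym, hyc, hys⟩ := this
  have hqy : q ≠ y := by rintro rfl; exact hqc (S.only_c hq hym)
  obtain ⟨n, hqn, hyn⟩ := line_exists R hqy
  refine Or.inr (Or.inr ⟨n, ⟨q, y, hq, hqn, hym, hyn, hqc, hyc, hqy⟩, ?_, hqn⟩)
  intro hDn
  exact hys (uniq_line R hqD hqn hDn hqs hDs ▸ hyn)

lemma m_mem_PP (S : Setup R l m c) {q : Point} (hq : R.Incid q m) : q ∈ PP R l m c :=
  PP_symm R l m c ▸ l_mem_PP S.symm hq

/-- (T1): two distinct transversals intersect. -/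
lemma trans_meet (S : Setup R l m c) {n1 n2 : Line} (h1 : IsTrans R l m c n1)
    (h2 : IsTrans R l m c n2) (hne : n1 ≠ n2) :
    ∃ r, R.Incid r n1 ∧ R.Incid r n2 := by
  obtain ⟨x1, y1, hx1l, hx1n, hy1m, hy1n, hx1c, hy1c, hxy1⟩ := h1
  obtain ⟨x2, y2, hx2l, hx2n, hy2m, hy2n, hx2c, hy2c, hxy2⟩ := h2
  by_cases hx : x1 = x2
  · exact ⟨x1, hx1n, hx ▸ hx2n⟩
  by_cases hy : y1 = y2
  · exact ⟨y1, hy1n, hy ▸ hy2n⟩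
  exact R.A6 l m n1 n2 c x1 x2 y1 y2 S.hlD S.hmD S.hlm S.hcl S.hcm hne
    hx1l hx1n hx2l hx2n hy1m hy1n hy2m hy2n
    hx hxy1 (fun h => hx1c (S.only_c hx1l (h ▸ hy2m)))
    (fun h => hx2c (S.only_c hx2l (h ▸ hy1m))) hxy2 hy

/-- key Pasch consequence: if `n` is an ordinary transversal with feet `x`, `y`, and
`e` is a line meeting `n` at `r ∉ {x, y}` and `l` at `s ≠ c` with `r ≠ s`,
then `e` meets `m`. -/
lemma crossA (S : Setup R l m c) {n e : Line} {x y r s : Point}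
    (hxl : R.Incid x l) (hxn : R.Incid x n) (hym : R.Incid y m) (hyn : R.Incid y n)
    (hxc : x ≠ c) (hyc : y ≠ c) (hxy : x ≠ y) (hnD : ¬R.Incid R.D n)
    (hre : R.Incid r e) (hrn : R.Incid r n) (hrx : r ≠ x) (hry : r ≠ y)
    (hse : R.Incid s e) (hsl : R.Incid s l) (hsc : s ≠ c) (hrs : r ≠ s) :
    ∃ t, R.Incid t e ∧ R.Incid t m := by
  have ht : IsTrans R l m c n := ⟨x, y, hxl, hxn, hym, hyn, hxc, hyc, hxy⟩
  have hnl : n ≠ l := trans_ne_l S ht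
  have hnm : n ≠ m := trans_ne_m S ht
  have hem : e ≠ m := by
    rintro rfl
    exact hry (uniq_pt R hnm hrn hre hyn hym)
  exact R.A6 n l e m x r y s c hnD S.hlD hnl hxn hxl hem
    hrn hre hyn hym hsl hse S.hcl S.hcm
    hry hrs (fun h => (trans_not_c S ht) (h ▸ hrn))
    (fun h => hyc (S.only_c (h ▸ hsl) hym))
    hyc hsc

end PRAux

namespace PRAux

variable {Point Line : Type} {R : ProjRect Point Line} {l m : Line} {c : Point}

lemma PP_elim {q : Point} (hq : q ∈ PP R l m c) (hqc : q ≠ c) (hqD : q ≠ R.D) :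
    ∃ n, IsTrans R l m c n ∧ ¬R.Incid R.D n ∧ R.Incid q n := by
  rcases hq with h | h | h
  · exact absurd h hqc
  · exact absurd h hqD
  · exact h

/-- (T2): a line through `c` and another point of the subplane meets every transversal. -/
lemma cline_meet_trans (S : Setup R l m c) {g n : Line} (hcg : R.Incid c g)
    {z : Point} (hz : z ∈ PP R l m c) (hzc : z ≠ c) (hzD : z ≠ R.D)
    (hzg : R.Incid z g) (hn : IsTrans R l m c n) :
    ∃ r, R.Incid r g ∧ R.Incid r n := by
  by_cases hzn : R.Incid z n
  · exact ⟨z, hzg, hzn⟩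
  obtain ⟨nz, htz, hDz, hznz⟩ := PP_elim hz hzc hzD
  have hnenz : nz ≠ n := by rintro rfl; exact hzn hznz
  obtain ⟨q, hqnz, hqn⟩ := trans_meet S htz hn hnenz
  have hzq : z ≠ q := by rintro rfl; exact hzn hqn
  have hgn : g ≠ n := by rintro rfl; exact trans_not_c S hn hcg
  have hqc : q ≠ c := by rintro rfl; exact trans_not_c S htz hqnz
  have hnzl := trans_ne_l S htz
  have hnzm := trans_ne_m S htz
  obtain ⟨xz, yz, hxzl, hxznz, hyzm, hyznz, hxzc, hyzc, hxyz⟩ := htz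
  obtain ⟨xn, yn, hxnl, hxnn, hynm, hynn, hxnc, hync, hxyn⟩ := hn
  by_cases hql : R.Incid q l
  · -- use l2 = m
    have hqyn : q ≠ yn := by
      rintro rfl
      exact hqc (S.only_c hql hynm)
    exact R.A6 nz m g n yz z q c yn hDz S.hmD hnzm hyznz hyzm hgn
      hznz hzg hqnz hqn S.hcm hcg hynm hynn
      hzq hzc (fun h => hzn (h ▸ hynn)) hqc hqyn (Ne.symm hync)
  · exact R.A6 nz l g n xz z q c xn hDz S.hlD hnzl hxznz hxzl hgn
      hznz hzg hqnz hqn S.hcl hcg hxnl hxnn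
      hzq hzc (fun h => hzn (h ▸ hxnn)) hqc (fun h => hql (h ▸ hxnl)) (Ne.symm hxnc)

/-- fullness for ordinary lines through `c`: every point of such a line is in `PP`. -/
lemma cline_full (S : Setup R l m c) {g : Line} (hcg : R.Incid c g)
    (hgD : ¬R.Incid R.D g) {z : Point} (hz : z ∈ PP R l m c) (hzc : z ≠ c)
    (hzg : R.Incid z g) : ∀ q, R.Incid q g → q ∈ PP R l m c := by
  intro q hqg
  by_cases hqc : q = c
  · exact hqc ▸ c_mem_PP
  by_cases hql : R.Incid q l
  · exact l_mem_PP S hql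
  by_cases hqm : R.Incid q m
  · exact m_mem_PP S hqm
  have hzD : z ≠ R.D := by rintro rfl; exact hgD hzg
  have hqD : q ≠ R.D := by rintro rfl; exact hgD hqg
  obtain ⟨nz, htz, hDz, hznz⟩ := PP_elim hz hzc hzD
  have hgnz : g ≠ nz := by rintro rfl; exact trans_not_c S htz hcg
  obtain ⟨xz, yz, hxzl, hxznz, hyzm, hyznz, hxzc, hyzc, hxyz⟩ := htz
  have hqxz : q ≠ xz := by rintro rfl; exact hql hxzl
  have hqyz : q ≠ yz := by rintro rfl; exact hqm hyzm
  obtain ⟨h, hqh, hxzh⟩ := line_exists R hqxz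
  have hhm : h ≠ m := by
    rintro rfl
    exact hxzc (S.only_c hxzl hxzh)
  obtain ⟨y, hyh, hym⟩ := R.A6 g nz h m z q c xz yz hgD hDz hgnz hzg hznz hhm
    hqg hqh hcg S.hcm hxznz hxzh hyznz hyzm
    hqc hqxz hqyz (Ne.symm hxzc) (Ne.symm hyzc) hxyz
  have hych : ¬R.Incid c h := by
    intro hch
    exact hql (uniq_line R hxzc hxzh hch hxzl S.hcl ▸ hqh)
  have hyc : y ≠ c := by rintro rfl; exact hych hyh
  have hxzy : xz ≠ y := by
    rintro rfl
    exact hxzc (S.only_c hxzl hym)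
  have hth : IsTrans R l m c h := ⟨xz, y, hxzl, hxzh, hym, hyh, hxzc, hyc, hxzy⟩
  by_cases hDh : R.Incid R.D h
  · -- second construction through the m-side foot
    obtain ⟨h', hqh', hyzh'⟩ := line_exists R hqyz
    have hhl : h' ≠ l := by
      rintro rfl
      exact hyzc (S.only_c hyzh' hyzm)
    obtain ⟨x', hxh', hxl'⟩ := R.A6 g nz h' l z q c yz xz hgD hDz hgnz hzg hznz hhl
      hqg hqh' hcg S.hcl hyznz hyzh' hxznz hxzl
      hqc hqyz hqxz (Ne.symm hyzc) (Ne.symm hxzc) (Ne.symm hxyz)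
    have hych' : ¬R.Incid c h' := by
      intro hch
      exact hqm (uniq_line R hyzc hyzh' hch hyzm S.hcm ▸ hqh')
    have hxc' : x' ≠ c := by rintro rfl; exact hych' hxh'
    have hxyz' : x' ≠ yz := by
      rintro rfl
      exact hxc' (S.only_c hxl' hyzm)
    have hth' : IsTrans R l m c h' := ⟨x', yz, hxl', hxh', hyzm, hyzh', hxc', hyzc, hxyz'⟩
    by_cases hDh' : R.Incid R.D h'
    · exfalso
      have hhh' : h = h' := uniq_line R hqD hqh hDh hqh' hDh'
      have : h = nz := uniq_line R hxyz hxzh (hhh' ▸ hyzh') hxznz hyznz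
      exact hDz (this ▸ hDh)
    · exact Or.inr (Or.inr ⟨h', hth', hDh', hqh'⟩)
  · exact Or.inr (Or.inr ⟨h, hth, hDh, hqh⟩)

end PRAux

namespace PRAux

variable {Point Line : Type} {R : ProjRect Point Line} {l m : Line} {c : Point}

/-- any two distinct points of `PP` are joined by a line of `LL`. -/
lemma join_LL (S : Setup R l m c) {p q : Point} (hp : p ∈ PP R l m c)
    (hq : q ∈ PP R l m c) (hne : p ≠ q) :
    ∃ e, e ∈ LL R l m c ∧ R.Incid p e ∧ R.Incid q e := by
  obtain ⟨e, hpe, hqe⟩ := line_exists R hne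
  by_cases hce : R.Incid c e
  · refine ⟨e, Or.inr ⟨hce, ?_⟩, hpe, hqe⟩
    by_cases hpc : p = c
    · exact ⟨q, hq, fun h => hne (hpc.trans h.symm), hqe⟩
    · exact ⟨p, hp, hpc, hpe⟩
  by_cases hDe : R.Incid R.D e
  · exact ⟨e, Or.inl (special_trans S hDe hce), hpe, hqe⟩
  have hpc : p ≠ c := by rintro rfl; exact hce hpe
  have hqc : q ≠ c := by rintro rfl; exact hce hqe
  have hpD : p ≠ R.D := by rintro rfl; exact hDe hpe
  have hqD : q ≠ R.D := by rintro rfl; exact hDe hqe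
  obtain ⟨np, htp, hDp, hpnp⟩ := PP_elim hp hpc hpD
  obtain ⟨nq, htq, hDq, hqnq⟩ := PP_elim hq hqc hqD
  by_cases hpnq : R.Incid p nq
  · exact ⟨nq, Or.inl htq, hpnq, hqnq⟩
  by_cases hqnp : R.Incid q np
  · exact ⟨np, Or.inl htp, hpnp, hqnp⟩
  have hnpq : np ≠ nq := by rintro rfl; exact hpnq hpnp
  suffices ht : IsTrans R l m c e by exact ⟨e, Or.inl ht, hpe, hqe⟩
  have Hp := htp
  have Hq := htq
  obtain ⟨xp, yp, hxpl, hxpnp, hypm, hypnp, hxpc, hypc, hxyp⟩ := Hp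
  obtain ⟨xq, yq, hxql, hxqnq, hyqm, hyqnq, hxqc, hyqc, hxyq⟩ := Hq
  by_cases hpl : R.Incid p l
  · by_cases hql : R.Incid q l
    · exact absurd (uniq_line R hne hpe hqe hpl hql ▸ S.hcl) hce
    by_cases hqm : R.Incid q m
    · exact ⟨p, q, hpl, hpe, hqm, hqe, hpc, hqc, hne⟩
    · obtain ⟨t, hte, htm⟩ := crossA S hxql hxqnq hyqm hyqnq hxqc hyqc hxyq hDq
        hqe hqnq (by rintro rfl; exact hql hxql) (by rintro rfl; exact hqm hyqm)
        hpe hpl hpc hne.symm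
      have htc : t ≠ c := by rintro rfl; exact hce hte
      have hpt : p ≠ t := by rintro rfl; exact hpc (S.only_c hpl htm)
      exact ⟨p, t, hpl, hpe, htm, hte, hpc, htc, hpt⟩
  by_cases hpm : R.Incid p m
  · by_cases hqm : R.Incid q m
    · exact absurd (uniq_line R hne hpe hqe hpm hqm ▸ S.hcm) hce
    by_cases hql : R.Incid q l
    · exact ⟨q, p, hql, hqe, hpm, hpe, hqc, hpc, hne.symm⟩
    · obtain ⟨t, hte, htl⟩ := crossA S.symm hyqm hyqnq hxql hxqnq hyqc hxqc hxyq.symm hDq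
        hqe hqnq (by rintro rfl; exact hqm hyqm) (by rintro rfl; exact hql hxql)
        hpe hpm hpc hne.symm
      have htc : t ≠ c := by rintro rfl; exact hce hte
      have htp : t ≠ p := by rintro rfl; exact htc (S.only_c htl hpm)
      exact ⟨t, p, htl, hte, hpm, hpe, htc, hpc, htp⟩
  by_cases hql : R.Incid q l
  · obtain ⟨t, hte, htm⟩ := crossA S hxpl hxpnp hypm hypnp hxpc hypc hxyp hDp
      hpe hpnp (by rintro rfl; exact hpl hxpl) (by rintro rfl; exact hpm hypm)
      hqe hql hqc hne
    have htc : t ≠ c := by rintro rfl; exact hce hte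
    have hqt : q ≠ t := by rintro rfl; exact hqc (S.only_c hql htm)
    exact ⟨q, t, hql, hqe, htm, hte, hqc, htc, hqt⟩
  by_cases hqm : R.Incid q m
  · obtain ⟨t, hte, htl⟩ := crossA S.symm hypm hypnp hxpl hxpnp hypc hxpc hxyp.symm hDp
      hpe hpnp (by rintro rfl; exact hpm hypm) (by rintro rfl; exact hpl hxpl)
      hqe hqm hqc hne
    have htc : t ≠ c := by rintro rfl; exact hce hte
    have htq : t ≠ q := by rintro rfl; exact htc (S.only_c htl hqm)
    exact ⟨t, q, htl, hte, hqm, hqe, htc, hqc, htq⟩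
  -- generic case : p, q off l ∪ m
  obtain ⟨ρ, hρp, hρq⟩ := trans_meet S htp htq hnpq
  by_cases hx : xp = xq
  · have hy : yp ≠ yq := by
      rintro rfl
      exact hnpq (uniq_line R hxyp hxpnp hypnp (hx ▸ hxqnq) hyqnq)
    obtain ⟨t, hte, htm⟩ := R.A6 np nq e m ρ p yp q yq hDp hDq hnpq hρp hρq
      (by rintro rfl; exact hpm hpe) hpnp hpe hypnp hypm hqnq hqe hyqnq hyqm
      (by rintro rfl; exact hpm hypm) hne (by rintro rfl; exact hpm hyqm)
      (by rintro h; exact hqm (h ▸ hypm)) hy (by rintro rfl; exact hqm hyqm)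
    have htc : t ≠ c := by rintro rfl; exact hce hte
    obtain ⟨u, hue, hul⟩ := crossA S.symm hypm hypnp hxpl hxpnp hypc hxpc hxyp.symm hDp
      hpe hpnp (by rintro rfl; exact hpm hypm) (by rintro rfl; exact hpl hxpl)
      hte htm htc (by rintro rfl; exact hpm htm)
    have huc : u ≠ c := by rintro rfl; exact hce hue
    have hut : u ≠ t := by rintro rfl; exact huc (S.only_c hul htm)
    exact ⟨u, t, hul, hue, htm, hte, huc, htc, hut⟩
  · obtain ⟨u, hue, hul⟩ := R.A6 np nq e l ρ p xp q xq hDp hDq hnpq hρp hρq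
      (by rintro rfl; exact hpl hpe) hpnp hpe hxpnp hxpl hqnq hqe hxqnq hxql
      (by rintro rfl; exact hpl hxpl) hne (by rintro rfl; exact hpl hxql)
      (by rintro h; exact hql (h ▸ hxpl)) hx (by rintro rfl; exact hql hxql)
    have huc : u ≠ c := by rintro rfl; exact hce hue
    obtain ⟨t, hte, htm⟩ := crossA S hxpl hxpnp hypm hypnp hxpc hypc hxyp hDp
      hpe hpnp (by rintro rfl; exact hpl hxpl) (by rintro rfl; exact hpm hypm)
      hue hul huc (by rintro rfl; exact hpl hul)
    have htc : t ≠ c := by rintro rfl; exact hce hte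
    have hut : u ≠ t := by rintro rfl; exact huc (S.only_c hul htm)
    exact ⟨u, t, hul, hue, htm, hte, huc, htc, hut⟩

end PRAux

namespace PRAux

variable {Point Line : Type} {R : ProjRect Point Line} {l m : Line} {c : Point}

/-- (S2): two distinct lines of `LL` meet in a point of `PP`. -/
lemma meet_PP (S : Setup R l m c) {e f : Line} (he : e ∈ LL R l m c)
    (hf : f ∈ LL R l m c) (hne : e ≠ f) :
    ∃ r, r ∈ PP R l m c ∧ R.Incid r e ∧ R.Incid r f := by
  have key : ∀ e f : Line, e ≠ f → IsTrans R l m c e →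
      (R.Incid c f ∧ ∃ z, z ∈ PP R l m c ∧ z ≠ c ∧ R.Incid z f) →
      ∃ r, r ∈ PP R l m c ∧ R.Incid r e ∧ R.Incid r f := by
    rintro e f hne hte ⟨hcf, z, hz, hzc, hzf⟩
    by_cases hDe : R.Incid R.D e
    · by_cases hDf : R.Incid R.D f
      · exact ⟨R.D, D_mem_PP, hDe, hDf⟩
      · have hfe : f ≠ e := hne.symm
        obtain ⟨r, hr, _⟩ := R.A5 e f hDe hfe
        have hzD : z ≠ R.D := by rintro rfl; exact hDf hzf
        exact ⟨r, cline_full S hcf hDf hz hzc hzf r hr.2, hr.1, hr.2⟩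
    · by_cases hDf : R.Incid R.D f
      · obtain ⟨r, hr, _⟩ := R.A5 f e hDf hne
        exact ⟨r, Or.inr (Or.inr ⟨e, hte, hDe, hr.2⟩), hr.2, hr.1⟩
      · have hzD : z ≠ R.D := by rintro rfl; exact hDf hzf
        obtain ⟨r, hrf, hre⟩ := cline_meet_trans S hcf hz hzc hzD hzf hte
        exact ⟨r, Or.inr (Or.inr ⟨e, hte, hDe, hre⟩), hre, hrf⟩
  rcases he with hte | hce
  · rcases hf with htf | hcf
    · by_cases hDe : R.Incid R.D e
      · by_cases hDf : R.Incid R.D f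
        · exact ⟨R.D, D_mem_PP, hDe, hDf⟩
        · obtain ⟨r, hre, hrf⟩ := trans_meet S hte htf hne
          exact ⟨r, Or.inr (Or.inr ⟨f, htf, hDf, hrf⟩), hre, hrf⟩
      · obtain ⟨r, hre, hrf⟩ := trans_meet S hte htf hne
        exact ⟨r, Or.inr (Or.inr ⟨e, hte, hDe, hre⟩), hre, hrf⟩
    · exact key e f hne hte hcf
  · rcases hf with htf | hcf
    · obtain ⟨r, h1, h2, h3⟩ := key f e hne.symm htf hce
      exact ⟨r, h1, h3, h2⟩
    · exact ⟨c, c_mem_PP, hce.1, hcf.1⟩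

/-- the generated structure is a subplane. -/
lemma subplane_PP (S : Setup R l m c) : R.IsSubplane (PP R l m c) (LL R l m c) := by
  refine ⟨?_, ?_, ?_⟩
  · intro p q hp hq hne
    obtain ⟨e, he, hpe, hqe⟩ := join_LL S hp hq hne
    exact ⟨e, ⟨he, hpe, hqe⟩, fun f ⟨_, hpf, hqf⟩ => uniq_line R hne hpf hqf hpe hqe⟩
  · intro e f he hf hne
    exact meet_PP S he hf hne
  · obtain ⟨a1, b1, d1, hab1, had1, hbd1, ha1, hb1, hd1⟩ := R.A3 l
    obtain ⟨x1, x2, hx12, hx1c, hx2c, hx1m, hx2m⟩ :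
        ∃ x1 x2, x1 ≠ x2 ∧ x1 ≠ c ∧ x2 ≠ c ∧ R.Incid x1 l ∧ R.Incid x2 l := by
      obtain ⟨x, y, hxy, hx, hy, hxm, hym⟩ := pick2 hab1 had1 hbd1
        (B := fun z => z = c) (fun u v hu hv => hu.trans hv.symm)
      refine ⟨x, y, hxy, hx, hy, ?_, ?_⟩
      · rcases hxm with rfl | rfl | rfl <;> assumption
      · rcases hym with rfl | rfl | rfl <;> assumption
    obtain ⟨a2, b2, d2, hab2, had2, hbd2, ha2, hb2, hd2⟩ := R.A3 m
    obtain ⟨y1, y2, hy12, hy1c, hy2c, hy1m, hy2m⟩ :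
        ∃ y1 y2, y1 ≠ y2 ∧ y1 ≠ c ∧ y2 ≠ c ∧ R.Incid y1 m ∧ R.Incid y2 m := by
      obtain ⟨x, y, hxy, hx, hy, hxm, hym⟩ := pick2 hab2 had2 hbd2
        (B := fun z => z = c) (fun u v hu hv => hu.trans hv.symm)
      refine ⟨x, y, hxy, hx, hy, ?_, ?_⟩
      · rcases hxm with rfl | rfl | rfl <;> assumption
      · rcases hym with rfl | rfl | rfl <;> assumption
    have hxy : ∀ x y : Point, R.Incid x l → x ≠ c → R.Incid y m → x ≠ y := by
      rintro x y hx hxc hy rfl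
      exact hxc (S.only_c hx hy)
    refine ⟨x1, x2, y1, y2, l_mem_PP S hx1m, l_mem_PP S hx2m, m_mem_PP S hy1m,
      m_mem_PP S hy2m, hx12, hxy _ _ hx1m hx1c hy1m, hxy _ _ hx1m hx1c hy2m,
      hxy _ _ hx2m hx2c hy1m, hxy _ _ hx2m hx2c hy2m, hy12, ?_, ?_, ?_, ?_⟩
    · rintro e - ⟨he1, he2, he3⟩
      have : e = l := uniq_line R hx12 he1 he2 hx1m hx2m
      exact hy1c (S.only_c (this ▸ he3) hy1m)
    · rintro e - ⟨he1, he2, he3⟩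
      have : e = l := uniq_line R hx12 he1 he2 hx1m hx2m
      exact hy2c (S.only_c (this ▸ he3) hy2m)
    · rintro e - ⟨he1, he2, he3⟩
      have : e = m := uniq_line R hy12 he2 he3 hy1m hy2m
      exact hx1c (S.only_c hx1m (this ▸ he1))
    · rintro e - ⟨he1, he2, he3⟩
      have : e = m := uniq_line R hy12 he2 he3 hy1m hy2m
      exact hx2c (S.only_c hx2m (this ▸ he1))

/-- the generated subplane is full. -/
lemma full_PP (S : Setup R l m c) : R.IsFull (PP R l m c) (LL R l m c) := by
  rintro e (hte | ⟨hce, z, hz, hzc, hze⟩) hDe q hq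
  · exact Or.inr (Or.inr ⟨e, hte, hDe, hq⟩)
  · exact cline_full S hce hDe hz hzc hze q hq

/-- there exist two distinct special transversals. -/
lemma spec_pair (S : Setup R l m c) :
    ∃ s1 s2 x1 x2, s1 ≠ s2 ∧ IsTrans R l m c s1 ∧ R.Incid R.D s1 ∧
      IsTrans R l m c s2 ∧ R.Incid R.D s2 ∧
      x1 ≠ x2 ∧ R.Incid x1 l ∧ R.Incid x2 l ∧ R.Incid x1 s1 ∧ R.Incid x2 s2 := by
  obtain ⟨a1, b1, d1, hab1, had1, hbd1, ha1, hb1, hd1⟩ := R.A3 l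
  obtain ⟨x1, x2, hx12, hx1c, hx2c, hx1l, hx2l⟩ :
      ∃ x1 x2, x1 ≠ x2 ∧ x1 ≠ c ∧ x2 ≠ c ∧ R.Incid x1 l ∧ R.Incid x2 l := by
    obtain ⟨x, y, hxy, hx, hy, hxm, hym⟩ := pick2 hab1 had1 hbd1
      (B := fun z => z = c) (fun u v hu hv => hu.trans hv.symm)
    refine ⟨x, y, hxy, hx, hy, ?_, ?_⟩
    · rcases hxm with rfl | rfl | rfl <;> assumption
    · rcases hym with rfl | rfl | rfl <;> assumption
  have hx1D : x1 ≠ R.D := by rintro rfl; exact S.hlD hx1l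
  have hx2D : x2 ≠ R.D := by rintro rfl; exact S.hlD hx2l
  obtain ⟨s1, hx1s, hDs1⟩ := line_exists R hx1D
  obtain ⟨s2, hx2s, hDs2⟩ := line_exists R hx2D
  have hcs1 : ¬R.Incid c s1 := by
    intro h
    exact S.hlD (uniq_line R hx1c hx1s h hx1l S.hcl ▸ hDs1)
  have hcs2 : ¬R.Incid c s2 := by
    intro h
    exact S.hlD (uniq_line R hx2c hx2s h hx2l S.hcl ▸ hDs2)
  have hs12 : s1 ≠ s2 := by
    rintro rfl
    exact S.hlD (uniq_line R hx12 hx1s hx2s hx1l hx2l ▸ hDs1)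
  exact ⟨s1, s2, x1, x2, hs12, special_trans S hDs1 hcs1, hDs1,
    special_trans S hDs2 hcs2, hDs2, hx12, hx1l, hx2l, hx1s, hx2s⟩

end PRAux

namespace PRAux

variable {Point Line : Type} {R : ProjRect Point Line} {l m : Line} {c : Point}

/-- uniqueness: any full subplane containing `c` and the lines `l`, `m`
coincides with the generated one. -/
lemma core_unique (S : Setup R l m c) {P0 : Set Point} {L0 : Set Line}
    (hsub : R.IsSubplane P0 L0) (hfull : R.IsFull P0 L0)
    (hc0 : c ∈ P0) (hl0 : l ∈ L0) (hm0 : m ∈ L0) :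
    P0 = PP R l m c ∧ L0 = LL R l m c := by
  have lsub0 : ∀ q, R.Incid q l → q ∈ P0 := hfull l hl0 S.hlD
  have msub0 : ∀ q, R.Incid q m → q ∈ P0 := hfull m hm0 S.hmD
  have trans0 : ∀ n, IsTrans R l m c n → n ∈ L0 := by
    intro n hn
    obtain ⟨x, y, hxl, hxn, hym, hyn, hxc, hyc, hxy⟩ := hn
    obtain ⟨f, ⟨hfL, hf1, hf2⟩, -⟩ := hsub.1 x y (lsub0 x hxl) (msub0 y hym) hxy
    rwa [uniq_line R hxy hf1 hf2 hxn hyn] at hfL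
  obtain ⟨s1, s2, x1, x2, hs12, hts1, hDs1, hts2, hDs2, hx12, hx1l, hx2l, hx1s, hx2s⟩ :=
    spec_pair S
  have hs1L : s1 ∈ L0 := trans0 s1 hts1
  have hs2L : s2 ∈ L0 := trans0 s2 hts2
  have hD0 : R.D ∈ P0 := by
    obtain ⟨r, hr0, hrs1, hrs2⟩ := hsub.2.1 s1 s2 hs1L hs2L hs12
    exact uniq_pt R hs12 hrs1 hrs2 hDs1 hDs2 ▸ hr0
  have hPP0 : PP R l m c ⊆ P0 := by
    rintro q (rfl | rfl | ⟨n, hn, hDn, hqn⟩)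
    · exact hc0
    · exact hD0
    · exact hfull n (trans0 n hn) hDn q hqn
  have hP0P : P0 ⊆ PP R l m c := by
    intro q hq0
    by_cases hqc : q = c
    · exact hqc ▸ c_mem_PP
    by_cases hql : R.Incid q l
    · exact l_mem_PP S hql
    by_cases hqm : R.Incid q m
    · exact m_mem_PP S hqm
    by_cases hqD : q = R.D
    · exact hqD ▸ D_mem_PP
    obtain ⟨sq, hqsq, hDsq⟩ := line_exists R hqD
    have hsql : sq ≠ l := by rintro rfl; exact S.hlD hDsq
    obtain ⟨a1, b1, d1, hab1, had1, hbd1, ha1, hb1, hd1⟩ := R.A3 l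
    have key := pick3 hab1 had1 hbd1 (B1 := fun z => z = c)
      (B2 := fun z => R.Incid z l ∧ R.Incid z sq)
      (fun u v hu hv => hu.trans hv.symm)
      (fun u v hu hv => uniq_pt R hsql hu.2 hu.1 hv.2 hv.1)
    obtain ⟨x, hxl, hxc, hxsq⟩ : ∃ x, R.Incid x l ∧ x ≠ c ∧ ¬R.Incid x sq := by
      rcases key with ⟨h1, h2⟩ | ⟨h1, h2⟩ | ⟨h1, h2⟩
      · exact ⟨a1, ha1, h1, fun h => h2 ⟨ha1, h⟩⟩
      · exact ⟨b1, hb1, h1, fun h => h2 ⟨hb1, h⟩⟩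
      · exact ⟨d1, hd1, h1, fun h => h2 ⟨hd1, h⟩⟩
    have hqx : q ≠ x := by rintro rfl; exact hql hxl
    obtain ⟨f, ⟨hfL, hqf, hxf⟩, -⟩ := hsub.1 q x hq0 (lsub0 x hxl) hqx
    have hDf : ¬R.Incid R.D f := by
      intro h
      exact hxsq (uniq_line R hqD hqf h hqsq hDsq ▸ hxf)
    have hfm : f ≠ m := by
      rintro rfl
      exact hxc (S.only_c hxl hxf)
    obtain ⟨y, hy0, hyf, hym⟩ := hsub.2.1 f m hfL hm0 hfm
    have hyc : y ≠ c := by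
      rintro rfl
      exact hql (uniq_line R hxc hxf hyf hxl S.hcl ▸ hqf)
    have hxy : x ≠ y := by
      rintro rfl
      exact hxc (S.only_c hxl hym)
    exact Or.inr (Or.inr ⟨f, ⟨x, y, hxl, hxf, hym, hyf, hxc, hyc, hxy⟩, hDf, hqf⟩)
  have hLL0 : LL R l m c ⊆ L0 := by
    rintro e (hte | ⟨hce, z, hz, hzc, hze⟩)
    · exact trans0 e hte
    · obtain ⟨f, ⟨hfL, hf1, hf2⟩, -⟩ := hsub.1 c z hc0 (hPP0 hz) (Ne.symm hzc)
      rwa [uniq_line R (Ne.symm hzc) hf1 hf2 hce hze] at hfL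
  have hL0L : L0 ⊆ LL R l m c := by
    intro e he0
    by_cases hce : R.Incid c e
    · have hes1 : e ≠ s1 := by rintro rfl; exact trans_not_c S hts1 hce
      obtain ⟨z, hz0, hze, hzs1⟩ := hsub.2.1 e s1 he0 hs1L hes1
      have hzc : z ≠ c := by rintro rfl; exact trans_not_c S hts1 hzs1
      exact Or.inr ⟨hce, z, hP0P hz0, hzc, hze⟩
    · have hel : e ≠ l := by rintro rfl; exact hce S.hcl
      have hem : e ≠ m := by rintro rfl; exact hce S.hcm
      obtain ⟨x, hx0, hxe, hxl⟩ := hsub.2.1 e l he0 hl0 hel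
      obtain ⟨y, hy0, hye, hym⟩ := hsub.2.1 e m he0 hm0 hem
      have hxc : x ≠ c := by rintro rfl; exact hce hxe
      have hyc : y ≠ c := by rintro rfl; exact hce hye
      have hxy : x ≠ y := by
        rintro rfl
        exact hxc (S.only_c hxl hym)
      exact Or.inl ⟨x, y, hxl, hxe, hym, hye, hxc, hyc, hxy⟩
  exact ⟨Set.Subset.antisymm hP0P hPP0, Set.Subset.antisymm hL0L hLL0⟩

/-- master existence-and-uniqueness statement. -/
lemma master (S : Setup R l m c) {u v : Point} (huc : u ≠ c) (hvc : v ≠ c)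
    (hul : R.Incid u l) (hvm : R.Incid v m) :
    ∃! π : Set Point × Set Line,
      R.IsSubplane π.1 π.2 ∧ R.IsFull π.1 π.2 ∧ u ∈ π.1 ∧ v ∈ π.1 ∧ c ∈ π.1 := by
  refine ⟨(PP R l m c, LL R l m c),
    ⟨subplane_PP S, full_PP S, l_mem_PP S hul, m_mem_PP S hvm, c_mem_PP⟩, ?_⟩
  rintro ⟨P0, L0⟩ ⟨hsub, hfull, hu0, hv0, hc0⟩
  have hl0 : l ∈ L0 := by
    obtain ⟨f, ⟨hfL, hf1, hf2⟩, -⟩ := hsub.1 u c hu0 hc0 huc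
    rwa [uniq_line R huc hf1 hf2 hul S.hcl] at hfL
  have hm0 : m ∈ L0 := by
    obtain ⟨f, ⟨hfL, hf1, hf2⟩, -⟩ := hsub.1 v c hv0 hc0 hvc
    rwa [uniq_line R hvc hf1 hf2 hvm S.hcm] at hfL
  obtain ⟨hP, hL⟩ := core_unique S hsub hfull hc0 hl0 hm0
  exact Prod.ext hP hL

end PRAux

/-- Three noncollinear ordinary points lie in a unique full projective subplane. -/
theorem stmt_10 {Point Line : Type} (R : ProjRect Point Line) (p1 p2 p3 : Point)
    (h1 : p1 ≠ R.D) (h2 : p2 ≠ R.D) (h3 : p3 ≠ R.D)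
    (h12 : p1 ≠ p2) (h13 : p1 ≠ p3) (h23 : p2 ≠ p3)
    (hnc : ∀ l : Line, ¬(R.Incid p1 l ∧ R.Incid p2 l ∧ R.Incid p3 l)) :
    ∃! π : Set Point × Set Line,
      R.IsSubplane π.1 π.2 ∧ R.IsFull π.1 π.2 ∧ p1 ∈ π.1 ∧ p2 ∈ π.1 ∧ p3 ∈ π.1 := by
  classical
  obtain ⟨e12, ⟨h1e12, h2e12⟩, -⟩ := R.A1 p1 p2 h12
  obtain ⟨e13, ⟨h1e13, h3e13⟩, -⟩ := R.A1 p1 p3 h13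
  obtain ⟨e23, ⟨h2e23, h3e23⟩, -⟩ := R.A1 p2 p3 h23
  by_cases hD12 : R.Incid R.D e12
  · -- the line p1p2 is special; use c = p3, l = e13, m = e23
    have hlD : ¬R.Incid R.D e13 := by
      intro h
      exact hnc e12 ⟨h1e12, h2e12, by
        rw [PRAux.uniq_line R h1 h1e12 hD12 h1e13 h]; exact h3e13⟩
    have hmD : ¬R.Incid R.D e23 := by
      intro h
      exact hnc e12 ⟨h1e12, h2e12, by
        rw [PRAux.uniq_line R h2 h2e12 hD12 h2e23 h]; exact h3e23⟩
    have hlm : e13 ≠ e23 := by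
      intro h
      exact hnc e13 ⟨h1e13, by rw [h]; exact h2e23, h3e13⟩
    exact PRAux.master ⟨h3e13, h3e23, hlm, hlD, hmD⟩ h13 h23 h1e13 h2e23
  · by_cases hD13 : R.Incid R.D e13
    · -- the line p1p3 is special; use c = p2, l = e12, m = e23
      have hmD : ¬R.Incid R.D e23 := by
        intro h
        exact hnc e13 ⟨h1e13, by
          rw [PRAux.uniq_line R h3 h3e13 hD13 h3e23 h]; exact h2e23, h3e13⟩
      have hlm : e12 ≠ e23 := by
        intro h
        exact hnc e12 ⟨h1e12, h2e12, by rw [h]; exact h3e23⟩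
      obtain ⟨π, ⟨ha, hb, hu, hv, hc⟩, hun⟩ :=
        PRAux.master ⟨h2e12, h2e23, hlm, hD12, hmD⟩ h12 (Ne.symm h23) h1e12 h3e23
      exact ⟨π, ⟨ha, hb, hu, hc, hv⟩,
        fun π' ⟨ha', hb', h1', h2', h3'⟩ => hun π' ⟨ha', hb', h1', h3', h2'⟩⟩
    · -- both e12 and e13 are ordinary; use c = p1
      have hlm : e12 ≠ e13 := by
        intro h
        exact hnc e12 ⟨h1e12, h2e12, by rw [h]; exact h3e13⟩
      obtain ⟨π, ⟨ha, hb, hu, hv, hc⟩, hun⟩ :=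
        PRAux.master ⟨h1e12, h1e13, hlm, hD12, hD13⟩ (Ne.symm h12) (Ne.symm h13) h2e12 h3e13
      exact ⟨π, ⟨ha, hb, hc, hu, hv⟩,
        fun π' ⟨ha', hb', h1', h2', h3'⟩ => hun π' ⟨ha', hb', h2', h3', h1'⟩⟩
end

section
/- In a projective rectangle, every maximal projective subplane is full. -/
namespace PRAux

variable {Point Line : Type}

section Defs
variable (R : ProjRect Point Line)

/-- `n` is a "join line": it passes through a point of `l` and a (different) point of `k`. -/
def Jn (l k n : Line) : Prop :=
  ∃ u v : Point, R.Incid u l ∧ R.Incid v k ∧ u ≠ v ∧ R.Incid u n ∧ R.Incid v n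

/-- Points of the full subplane generated by `l` and `k`. -/
def Pf (l k : Line) (x : Point) : Prop :=
  x = R.D ∨ ∃ n : Line, Jn R l k n ∧ ¬R.Incid R.D n ∧ R.Incid x n

/-- Lines of the full subplane generated by `l` and `k` (with common point `c`). -/
def Lf (l k : Line) (c : Point) (n : Line) : Prop :=
  Jn R l k n ∨ (R.Incid c n ∧ ∃ x, Pf R l k x ∧ ¬R.Incid x l ∧ ¬R.Incid x k ∧ R.Incid x n)

/-- Basic configuration: two distinct ordinary lines meeting at `c`. -/
structure Base (l k : Line) (c : Point) : Prop where
  hDl : ¬R.Incid R.D l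
  hDk : ¬R.Incid R.D k
  hlk : l ≠ k
  hcl : R.Incid c l
  hck : R.Incid c k

end Defs

variable {R : ProjRect Point Line}

theorem uniq_line_s11 {x y : Point} (hxy : x ≠ y) {n m : Line}
    (h1 : R.Incid x n) (h2 : R.Incid y n) (h3 : R.Incid x m) (h4 : R.Incid y m) : n = m := by
  obtain ⟨u, -, hu⟩ := R.A1 x y hxy
  rw [hu n ⟨h1, h2⟩, hu m ⟨h3, h4⟩]

theorem cpt_uniq {n m : Line} (hnm : n ≠ m) {x y : Point}
    (h1 : R.Incid x n) (h2 : R.Incid x m) (h3 : R.Incid y n) (h4 : R.Incid y m) : x = y := by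
  by_contra h
  exact hnm (uniq_line_s11 h h1 h3 h2 h4)

theorem line_exists_s11 (x y : Point) (hxy : x ≠ y) : ∃ n, R.Incid x n ∧ R.Incid y n :=
  (R.A1 x y hxy).exists

theorem exists_two_ne (R : ProjRect Point Line) (n : Line) (z : Point) :
    ∃ u v : Point, R.Incid u n ∧ R.Incid v n ∧ u ≠ v ∧ u ≠ z ∧ v ≠ z := by
  obtain ⟨p, q, r, hpq, hpr, hqr, hp, hq, hr⟩ := R.A3 n
  by_cases h1 : p = z
  · exact ⟨q, r, hq, hr, hqr, fun h => hpq (h1.trans h.symm), fun h => hpr (h1.trans h.symm)⟩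
  · by_cases h2 : q = z
    · exact ⟨p, r, hp, hr, hpr, h1, fun h => hqr (h2.trans h.symm)⟩
    · exact ⟨p, q, hp, hq, hpq, h1, h2⟩

variable {l k : Line} {c : Point}

theorem Base.swap (B : Base R l k c) : Base R k l c :=
  ⟨B.hDk, B.hDl, B.hlk.symm, B.hck, B.hcl⟩

theorem Jn_symm {n : Line} (h : Jn R l k n) : Jn R k l n := by
  obtain ⟨u, v, hul, hvk, huv, hun, hvn⟩ := h
  exact ⟨v, u, hvk, hul, huv.symm, hvn, hun⟩

theorem Pf_symm {x : Point} (h : Pf R l k x) : Pf R k l x := by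
  rcases h with h | ⟨n, hJ, hD, hx⟩
  · exact Or.inl h
  · exact Or.inr ⟨n, Jn_symm hJ, hD, hx⟩

theorem mem_lk (B : Base R l k c) {x : Point} (h1 : R.Incid x l) (h2 : R.Incid x k) : x = c :=
  cpt_uniq B.hlk h1 h2 B.hcl B.hck

theorem Jn_l (B : Base R l k c) : Jn R l k l := by
  obtain ⟨u, -, hu, -, -, huc, -⟩ := exists_two_ne R l c
  exact ⟨u, c, hu, B.hck, huc, hu, B.hcl⟩

theorem Jn_k (B : Base R l k c) : Jn R l k k := by
  obtain ⟨v, -, hv, -, -, hvc, -⟩ := exists_two_ne R k c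
  exact ⟨c, v, B.hcl, hv, Ne.symm hvc, B.hck, hv⟩

theorem Pf_of_l (B : Base R l k c) {x : Point} (h : R.Incid x l) : Pf R l k x :=
  Or.inr ⟨l, Jn_l B, B.hDl, h⟩

theorem Pf_of_k (B : Base R l k c) {x : Point} (h : R.Incid x k) : Pf R l k x :=
  Or.inr ⟨k, Jn_k B, B.hDk, h⟩

theorem Pf_D : Pf R l k R.D := Or.inl rfl

theorem Pf_of_join {n : Line} (hJ : Jn R l k n) (hD : ¬R.Incid R.D n) {q : Point}
    (hq : R.Incid q n) : Pf R l k q :=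
  Or.inr ⟨n, hJ, hD, hq⟩

/-- Two distinct join lines always meet. -/
theorem meet_joins (B : Base R l k c) {n1 n2 : Line} (h1 : Jn R l k n1) (h2 : Jn R l k n2)
    (h12 : n1 ≠ n2) : ∃ q, R.Incid q n1 ∧ R.Incid q n2 := by
  obtain ⟨u1, v1, hu1l, hv1k, huv1, hu1n, hv1n⟩ := h1
  obtain ⟨u2, v2, hu2l, hv2k, huv2, hu2n, hv2n⟩ := h2
  by_cases e1 : u1 = u2
  · exact ⟨u1, hu1n, by rw [e1]; exact hu2n⟩
  by_cases e2 : v1 = v2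
  · exact ⟨v1, hv1n, by rw [e2]; exact hv2n⟩
  by_cases e3 : u1 = v2
  · exact ⟨u1, hu1n, by rw [e3]; exact hv2n⟩
  by_cases e4 : u2 = v1
  · exact ⟨v1, hv1n, by rw [← e4]; exact hu2n⟩
  exact R.A6 l k n1 n2 c u1 u2 v1 v2 B.hDl B.hDk B.hlk B.hcl B.hck h12
    hu1l hu1n hu2l hu2n hv1k hv1n hv2k hv2n e1 huv1 e3 e4 huv2 e2

/-- Key half-step: a line through a `Pf`-point and a point of `k` also meets `l`. -/
theorem half (B : Base R l k c) {n : Line} {z v : Point} (hz : Pf R l k z)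
    (hzn : R.Incid z n) (hzl : ¬R.Incid z l) (hzk : ¬R.Incid z k)
    (hvn : R.Incid v n) (hvk : R.Incid v k) (hvl : ¬R.Incid v l) :
    ∃ u, R.Incid u n ∧ R.Incid u l := by
  have hnl : n ≠ l := by intro h; rw [h] at hzn; exact hzl hzn
  by_cases hDn : R.Incid R.D n
  · obtain ⟨q, hq, -⟩ := R.A5 n l hDn (Ne.symm hnl)
    exact ⟨q, hq.1, hq.2⟩
  rcases hz with rfl | ⟨j, ⟨u1, v1, hu1l, hv1k, hu1v1, hu1j, hv1j⟩, hjD, hzj⟩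
  · exact absurd hzn hDn
  by_cases hu1n : R.Incid u1 n
  · exact ⟨u1, hu1n, hu1l⟩
  have hjk : j ≠ k := by intro h; rw [h] at hzj; exact hzk hzj
  have hu1c : u1 ≠ c := by
    intro h
    rw [h] at hu1v1 hu1j
    exact hjk (uniq_line_s11 hu1v1 hu1j hv1j B.hck hv1k)
  exact R.A6 k j n l v1 v c z u1 B.hDk hjD (Ne.symm hjk) hv1k hv1j hnl
    hvk hvn B.hck B.hcl hzj hzn hu1j hu1l
    (by intro h; rw [h] at hvl; exact hvl B.hcl)
    (by intro h; rw [h] at hvk; exact hzk hvk)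
    (by intro h; rw [h] at hvl; exact hvl hu1l)
    (by intro h; rw [← h] at hzl; exact hzl B.hcl)
    (Ne.symm hu1c)
    (by intro h; rw [h] at hzl; exact hzl hu1l)

/-- A line through two distinct `Pf`-points, not through `c`, meets both `l` and `k`. -/
theorem meet (B : Base R l k c) {x y : Point} {n : Line} (hx : Pf R l k x) (hy : Pf R l k y)
    (hxy : x ≠ y) (hxn : R.Incid x n) (hyn : R.Incid y n) (hcn : ¬R.Incid c n) :
    (∃ u, R.Incid u n ∧ R.Incid u l) ∧ (∃ v, R.Incid v n ∧ R.Incid v k) := by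
  have hnl : n ≠ l := by intro h; rw [h] at hcn; exact hcn B.hcl
  have hnk : n ≠ k := by intro h; rw [h] at hcn; exact hcn B.hck
  by_cases hDn : R.Incid R.D n
  · constructor
    · obtain ⟨q, hq, -⟩ := R.A5 n l hDn (Ne.symm hnl); exact ⟨q, hq.1, hq.2⟩
    · obtain ⟨q, hq, -⟩ := R.A5 n k hDn (Ne.symm hnk); exact ⟨q, hq.1, hq.2⟩
  have hxD : x ≠ R.D := by rintro rfl; exact hDn hxn
  have hyD : y ≠ R.D := by rintro rfl; exact hDn hyn
  have halfE : (∃ v, R.Incid v n ∧ R.Incid v k) → ∃ u, R.Incid u n ∧ R.Incid u l := by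
    rintro ⟨v, hvn, hvk⟩
    have hvl : ¬R.Incid v l := by
      intro h
      rw [mem_lk B h hvk] at hvn
      exact hcn hvn
    by_cases hxl : R.Incid x l
    · exact ⟨x, hxn, hxl⟩
    by_cases hxk : R.Incid x k
    · have hyk : ¬R.Incid y k := fun h => hnk (uniq_line_s11 hxy hxn hyn hxk h)
      by_cases hyl : R.Incid y l
      · exact ⟨y, hyn, hyl⟩
      · exact half B hy hyn hyl hyk hvn hvk hvl
    · exact half B hx hxn hxl hxk hvn hvk hvl
  have halfE' : (∃ u, R.Incid u n ∧ R.Incid u l) → ∃ v, R.Incid v n ∧ R.Incid v k := by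
    rintro ⟨u, hun, hul⟩
    have huk : ¬R.Incid u k := by
      intro h
      rw [mem_lk B hul h] at hun
      exact hcn hun
    by_cases hxk : R.Incid x k
    · exact ⟨x, hxn, hxk⟩
    by_cases hxl : R.Incid x l
    · have hyl : ¬R.Incid y l := fun h => hnl (uniq_line_s11 hxy hxn hyn hxl h)
      by_cases hyk : R.Incid y k
      · exact ⟨y, hyn, hyk⟩
      · exact half B.swap (Pf_symm hy) hyn hyk hyl hun hul huk
    · exact half B.swap (Pf_symm hx) hxn hxk hxl hun hul huk
  by_cases hxl : R.Incid x l
  · exact ⟨⟨x, hxn, hxl⟩, halfE' ⟨x, hxn, hxl⟩⟩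
  by_cases hyl : R.Incid y l
  · exact ⟨⟨y, hyn, hyl⟩, halfE' ⟨y, hyn, hyl⟩⟩
  by_cases hxk : R.Incid x k
  · exact ⟨halfE ⟨x, hxn, hxk⟩, ⟨x, hxn, hxk⟩⟩
  by_cases hyk : R.Incid y k
  · exact ⟨halfE ⟨y, hyn, hyk⟩, ⟨y, hyn, hyk⟩⟩
  rcases hx with rfl | ⟨jx, ⟨u1, v1, hu1l, hv1k, hu1v1, hu1jx, hv1jx⟩, hjxD, hxjx⟩
  · exact absurd rfl hxD
  rcases hy with rfl | ⟨jy, ⟨u2, v2, hu2l, hv2k, hu2v2, hu2jy, hv2jy⟩, hjyD, hyjy⟩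
  · exact absurd rfl hyD
  by_cases hnjx : n = jx
  · exact ⟨⟨u1, by rw [hnjx]; exact hu1jx, hu1l⟩, ⟨v1, by rw [hnjx]; exact hv1jx, hv1k⟩⟩
  by_cases hnjy : n = jy
  · exact ⟨⟨u2, by rw [hnjy]; exact hu2jy, hu2l⟩, ⟨v2, by rw [hnjy]; exact hv2jy, hv2k⟩⟩
  by_cases hu1n : R.Incid u1 n
  · have E : ∃ u, R.Incid u n ∧ R.Incid u l := ⟨u1, hu1n, hu1l⟩
    exact ⟨E, halfE' E⟩
  by_cases hv1n : R.Incid v1 n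
  · have E' : ∃ v, R.Incid v n ∧ R.Incid v k := ⟨v1, hv1n, hv1k⟩
    exact ⟨halfE E', E'⟩
  by_cases hu2n : R.Incid u2 n
  · have E : ∃ u, R.Incid u n ∧ R.Incid u l := ⟨u2, hu2n, hu2l⟩
    exact ⟨E, halfE' E⟩
  by_cases hv2n : R.Incid v2 n
  · have E' : ∃ v, R.Incid v n ∧ R.Incid v k := ⟨v2, hv2n, hv2k⟩
    exact ⟨halfE E', E'⟩
  have hjxjy : jx ≠ jy := by
    intro h
    exact hnjx (uniq_line_s11 hxy hxn hyn hxjx (by rw [h]; exact hyjy))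
  obtain ⟨P, hPx, hPy⟩ := meet_joins B ⟨u1, v1, hu1l, hv1k, hu1v1, hu1jx, hv1jx⟩
    ⟨u2, v2, hu2l, hv2k, hu2v2, hu2jy, hv2jy⟩ hjxjy
  by_cases hu12 : u1 = u2
  · have hv12 : v1 ≠ v2 := by
      intro h
      exact hjxjy (uniq_line_s11 hu1v1 hu1jx hv1jx (by rw [hu12]; exact hu2jy)
        (by rw [h]; exact hv2jy))
    have E' : ∃ v, R.Incid v n ∧ R.Incid v k := by
      refine R.A6 jx jy n k P x v1 y v2 hjxD hjyD hjxjy hPx hPy hnk hxjx hxn hv1jx hv1k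
        hyjy hyn hv2jy hv2k ?_ hxy ?_ ?_ hv12 ?_
      · intro h; rw [h] at hxk; exact hxk hv1k
      · intro h; rw [h] at hxk; exact hxk hv2k
      · intro h; rw [← h] at hyk; exact hyk hv1k
      · intro h; rw [h] at hyk; exact hyk hv2k
    exact ⟨halfE E', E'⟩
  · have E : ∃ u, R.Incid u n ∧ R.Incid u l := by
      refine R.A6 jx jy n l P x u1 y u2 hjxD hjyD hjxjy hPx hPy hnl hxjx hxn hu1jx hu1l
        hyjy hyn hu2jy hu2l ?_ hxy ?_ ?_ hu12 ?_
      · intro h; rw [h] at hxl; exact hxl hu1l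
      · intro h; rw [h] at hxl; exact hxl hu2l
      · intro h; rw [← h] at hyl; exact hyl hu1l
      · intro h; rw [h] at hyl; exact hyl hu2l
    exact ⟨E, halfE' E⟩

/-- Fullness of ordinary `c`-pencil lines: every point of such a line is in `Pf`. -/
theorem cline_full_s11 (B : Base R l k c) {n : Line} (hcn : R.Incid c n) (hDn : ¬R.Incid R.D n)
    {w : Point} (hw : Pf R l k w) (hwl : ¬R.Incid w l) (hwk : ¬R.Incid w k)
    (hwn : R.Incid w n) {q : Point} (hqn : R.Incid q n) : Pf R l k q := by
  by_cases hql : R.Incid q l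
  · exact Pf_of_l B hql
  by_cases hqk : R.Incid q k
  · exact Pf_of_k B hqk
  rcases hw with rfl | ⟨jw, ⟨u1, v1, hu1l, hv1k, hu1v1, hu1jw, hv1jw⟩, hjwD, hwjw⟩
  · exact absurd hwn hDn
  by_cases hqjw : R.Incid q jw
  · exact Pf_of_join ⟨u1, v1, hu1l, hv1k, hu1v1, hu1jw, hv1jw⟩ hjwD hqjw
  have hu1c : u1 ≠ c := by
    intro h
    rw [h] at hu1v1 hu1jw
    rw [uniq_line_s11 hu1v1 hu1jw hv1jw B.hck hv1k] at hwjw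
    exact hwk hwjw
  have hv1c : v1 ≠ c := by
    intro h
    rw [h] at hu1v1 hv1jw
    rw [uniq_line_s11 hu1v1 hu1jw hv1jw hu1l B.hcl] at hwjw
    exact hwl hwjw
  have hnjw : n ≠ jw := by
    intro h
    rw [h] at hcn
    rw [uniq_line_s11 hu1c hu1jw hcn hu1l B.hcl] at hwjw
    exact hwl hwjw
  have hqD : q ≠ R.D := by rintro rfl; exact hDn hqn
  have hqc : q ≠ c := by rintro rfl; exact hql B.hcl
  have hqu1 : q ≠ u1 := by rintro rfl; exact hql hu1l
  have hqv1 : q ≠ v1 := by rintro rfl; exact hqk hv1k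
  obtain ⟨m, hqm, hu1m⟩ := line_exists_s11 q u1 hqu1
  obtain ⟨v', hv'm, hv'k⟩ := R.A6 jw n m k w u1 v1 q c hjwD hDn (Ne.symm hnjw) hwjw hwn
    (by intro h; rw [h] at hqm; exact hqk hqm)
    hu1jw hu1m hv1jw hv1k hqn hqm hcn B.hck
    hu1v1 (Ne.symm hqu1) hu1c (Ne.symm hqv1) hv1c hqc
  have hJm : Jn R l k m := by
    refine ⟨u1, v', hu1l, hv'k, ?_, hu1m, hv'm⟩
    intro h
    rw [h] at hu1c hu1l
    exact hu1c (mem_lk B hu1l hv'k)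
  by_cases hDm : R.Incid R.D m
  · obtain ⟨m2, hqm2, hv1m2⟩ := line_exists_s11 q v1 hqv1
    obtain ⟨u', hu'm2, hu'l⟩ := R.A6 jw n m2 l w v1 u1 q c hjwD hDn (Ne.symm hnjw) hwjw hwn
      (by intro h; rw [h] at hqm2; exact hql hqm2)
      hv1jw hv1m2 hu1jw hu1l hqn hqm2 hcn B.hcl
      (Ne.symm hu1v1) (Ne.symm hqv1) hv1c (Ne.symm hqu1) hu1c hqc
    have hJm2 : Jn R l k m2 := by
      refine ⟨u', v1, hu'l, hv1k, ?_, hu'm2, hv1m2⟩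
      intro h
      rw [h] at hu'l
      exact hv1c (mem_lk B hu'l hv1k)
    by_cases hDm2 : R.Incid R.D m2
    · exfalso
      have hmm : m = m2 := uniq_line_s11 hqD hqm hDm hqm2 hDm2
      have hmjw : m = jw := uniq_line_s11 hu1v1 hu1m (by rw [hmm]; exact hv1m2) hu1jw hv1jw
      rw [hmjw] at hqm
      exact hqjw hqm
    · exact Pf_of_join hJm2 hDm2 hqm2
  · exact Pf_of_join hJm hDm hqm

/-- An ordinary join line and an ordinary `c`-pencil line meet in a `Pf`-point. -/
theorem jvc (B : Base R l k c) {n1 n2 : Line} (hJ1 : Jn R l k n1) (hD1 : ¬R.Incid R.D n1)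
    (hD2 : ¬R.Incid R.D n2) (hcn2 : R.Incid c n2) {w : Point} (hw : Pf R l k w)
    (hwl : ¬R.Incid w l) (hwk : ¬R.Incid w k) (hwn2 : R.Incid w n2) (h12 : n1 ≠ n2) :
    ∃ q, Pf R l k q ∧ R.Incid q n1 ∧ R.Incid q n2 := by
  by_cases hc1 : R.Incid c n1
  · exact ⟨c, Pf_of_l B B.hcl, hc1, hcn2⟩
  by_cases hw1 : R.Incid w n1
  · exact ⟨w, hw, hw1, hwn2⟩
  rcases hw with rfl | ⟨jw, ⟨u1, v1, hu1l, hv1k, hu1v1, hu1jw, hv1jw⟩, hjwD, hwjw⟩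
  · exact absurd hwn2 hD2
  have hu1c : u1 ≠ c := by
    intro h
    rw [h] at hu1v1 hu1jw
    rw [uniq_line_s11 hu1v1 hu1jw hv1jw B.hck hv1k] at hwjw
    exact hwk hwjw
  have hv1c : v1 ≠ c := by
    intro h
    rw [h] at hu1v1 hv1jw
    rw [uniq_line_s11 hu1v1 hu1jw hv1jw hu1l B.hcl] at hwjw
    exact hwl hwjw
  obtain ⟨a, b, hal, hbk, hab, han1, hbn1⟩ := hJ1
  have hn1jw : n1 ≠ jw := by
    intro h
    rw [← h] at hwjw
    exact hw1 hwjw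
  obtain ⟨z, hzn1, hzjw⟩ := meet_joins B ⟨a, b, hal, hbk, hab, han1, hbn1⟩
    ⟨u1, v1, hu1l, hv1k, hu1v1, hu1jw, hv1jw⟩ hn1jw
  by_cases hz2 : R.Incid z n2
  · exact ⟨z, Pf_of_join ⟨a, b, hal, hbk, hab, han1, hbn1⟩ hD1 hzn1, hzn1, hz2⟩
  have hzc : z ≠ c := by rintro rfl; exact hc1 hzn1
  have hwz : w ≠ z := by rintro rfl; exact hz2 hwn2
  have hbc : b ≠ c := by rintro rfl; exact hc1 hbn1
  have hac : a ≠ c := by rintro rfl; exact hc1 han1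
  by_cases hzl : R.Incid z l
  · have hjwk : jw ≠ k := by
      intro h
      rw [h] at hwjw
      exact hwk hwjw
    obtain ⟨q, hq2, hq1⟩ := R.A6 jw k n2 n1 v1 w z c b hjwD B.hDk hjwk hv1jw hv1k
      (Ne.symm h12) hwjw hwn2 hzjw hzn1 B.hck hcn2 hbk hbn1
      hwz (by intro h; rw [h] at hwl; exact hwl B.hcl)
      (by intro h; rw [h] at hwk; exact hwk hbk) hzc
      (by intro h; rw [h] at hzl; exact hbc (mem_lk B hzl hbk))
      (Ne.symm hbc)
    exact ⟨q, Pf_of_join ⟨a, b, hal, hbk, hab, han1, hbn1⟩ hD1 hq1, hq1, hq2⟩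
  · have hjwl : jw ≠ l := by
      intro h
      rw [h] at hwjw
      exact hwl hwjw
    obtain ⟨q, hq2, hq1⟩ := R.A6 jw l n2 n1 u1 w z c a hjwD B.hDl hjwl hu1jw hu1l
      (Ne.symm h12) hwjw hwn2 hzjw hzn1 B.hcl hcn2 hal han1
      hwz (by intro h; rw [h] at hwl; exact hwl B.hcl)
      (by intro h; rw [h] at hwl; exact hwl hal) hzc
      (by intro h; rw [h] at hzl; exact hzl hal)
      (Ne.symm hac)
    exact ⟨q, Pf_of_join ⟨a, b, hal, hbk, hab, han1, hbn1⟩ hD1 hq1, hq1, hq2⟩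

/-- Axiom (2) for the generated subplane. -/
theorem ax2 (B : Base R l k c) : ∀ n1 n2 : Line, Lf R l k c n1 → Lf R l k c n2 → n1 ≠ n2 →
    ∃ x, Pf R l k x ∧ R.Incid x n1 ∧ R.Incid x n2 := by
  intro n1 n2 h1 h2 h12
  by_cases hD1 : R.Incid R.D n1
  · by_cases hD2 : R.Incid R.D n2
    · exact ⟨R.D, Pf_D, hD1, hD2⟩
    · obtain ⟨q, hq, -⟩ := R.A5 n1 n2 hD1 (Ne.symm h12)
      refine ⟨q, ?_, hq.1, hq.2⟩
      rcases h2 with hJ | ⟨hcn2, w, hw, hwl, hwk, hwn2⟩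
      · exact Pf_of_join hJ hD2 hq.2
      · exact cline_full_s11 B hcn2 hD2 hw hwl hwk hwn2 hq.2
  · by_cases hD2 : R.Incid R.D n2
    · obtain ⟨q, hq, -⟩ := R.A5 n2 n1 hD2 h12
      refine ⟨q, ?_, hq.2, hq.1⟩
      rcases h1 with hJ | ⟨hcn1, w, hw, hwl, hwk, hwn1⟩
      · exact Pf_of_join hJ hD1 hq.2
      · exact cline_full_s11 B hcn1 hD1 hw hwl hwk hwn1 hq.2
    · rcases h1 with hJ1 | ⟨hcn1, w1, hw1, hw1l, hw1k, hw1n1⟩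
      · rcases h2 with hJ2 | ⟨hcn2, w2, hw2, hw2l, hw2k, hw2n2⟩
        · obtain ⟨q, hq1, hq2⟩ := meet_joins B hJ1 hJ2 h12
          exact ⟨q, Pf_of_join hJ1 hD1 hq1, hq1, hq2⟩
        · exact jvc B hJ1 hD1 hD2 hcn2 hw2 hw2l hw2k hw2n2 h12
      · rcases h2 with hJ2 | ⟨hcn2, w2, hw2, hw2l, hw2k, hw2n2⟩
        · obtain ⟨q, hqP, hq2, hq1⟩ := jvc B hJ2 hD2 hD1 hcn1 hw1 hw1l hw1k hw1n1 (Ne.symm h12)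
          exact ⟨q, hqP, hq1, hq2⟩
        · exact ⟨c, Pf_of_l B B.hcl, hcn1, hcn2⟩

/-- Axiom (1) for the generated subplane. -/
theorem ax1 (B : Base R l k c) : ∀ x y : Point, Pf R l k x → Pf R l k y → x ≠ y →
    ∃! n, Lf R l k c n ∧ R.Incid x n ∧ R.Incid y n := by
  intro x y hx hy hxy
  obtain ⟨n, hxn, hyn⟩ := line_exists_s11 x y hxy
  refine ⟨n, ⟨?_, hxn, hyn⟩, fun n' h' => uniq_line_s11 hxy h'.2.1 h'.2.2 hxn hyn⟩
  by_cases hcn : R.Incid c n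
  · by_cases hxl : R.Incid x l
    · by_cases hyl : R.Incid y l
      · rw [uniq_line_s11 hxy hxn hyn hxl hyl]; exact Or.inl (Jn_l B)
      · by_cases hyk : R.Incid y k
        · by_cases hxc : x = c
          · rw [uniq_line_s11 hxy hxn hyn (by rw [hxc]; exact B.hck) hyk]; exact Or.inl (Jn_k B)
          · exact Or.inl ⟨x, y, hxl, hyk, hxy, hxn, hyn⟩
        · exact Or.inr ⟨hcn, y, hy, hyl, hyk, hyn⟩
    · by_cases hxk : R.Incid x k
      · by_cases hyl : R.Incid y l
        · by_cases hyc : y = c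
          · rw [uniq_line_s11 hxy hxn hyn hxk (by rw [hyc]; exact B.hck)]; exact Or.inl (Jn_k B)
          · exact Or.inl ⟨y, x, hyl, hxk, Ne.symm hxy, hyn, hxn⟩
        · by_cases hyk : R.Incid y k
          · rw [uniq_line_s11 hxy hxn hyn hxk hyk]; exact Or.inl (Jn_k B)
          · exact Or.inr ⟨hcn, y, hy, hyl, hyk, hyn⟩
      · exact Or.inr ⟨hcn, x, hx, hxl, hxk, hxn⟩
  · obtain ⟨⟨u, hun, hul⟩, ⟨v, hvn, hvk⟩⟩ := meet B hx hy hxy hxn hyn hcn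
    have huv : u ≠ v := by
      intro h
      rw [mem_lk B hul (by rw [h]; exact hvk)] at hun
      exact hcn hun
    exact Or.inl ⟨u, v, hul, hvk, huv, hun, hvn⟩

/-- The generated structure is a subplane. -/
theorem F_sub (B : Base R l k c) :
    R.IsSubplane {x | Pf R l k x} {n | Lf R l k c n} := by
  refine ⟨fun x y hx hy hxy => ax1 B x y hx hy hxy,
    fun n1 n2 h1 h2 h12 => ax2 B n1 n2 h1 h2 h12, ?_⟩
  obtain ⟨u1, u2, hu1, hu2, h12, h1c, h2c⟩ := exists_two_ne R l c
  obtain ⟨v1, v2, hv1, hv2, h34, h3c, h4c⟩ := exists_two_ne R k c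
  have huv : ∀ u v : Point, R.Incid u l → R.Incid v k → u ≠ c → u ≠ v := by
    intro u v hu hv huc h
    exact huc (mem_lk B hu (by rw [h]; exact hv))
  refine ⟨u1, u2, v1, v2, Pf_of_l B hu1, Pf_of_l B hu2, Pf_of_k B hv1, Pf_of_k B hv2,
    h12, huv u1 v1 hu1 hv1 h1c, huv u1 v2 hu1 hv2 h1c,
    huv u2 v1 hu2 hv1 h2c, huv u2 v2 hu2 hv2 h2c, h34, ?_, ?_, ?_, ?_⟩
  · rintro m - ⟨ha, hb, hc'⟩
    rw [uniq_line_s11 h12 ha hb hu1 hu2] at hc'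
    exact h3c (mem_lk B hc' hv1)
  · rintro m - ⟨ha, hb, hc'⟩
    rw [uniq_line_s11 h12 ha hb hu1 hu2] at hc'
    exact h4c (mem_lk B hc' hv2)
  · rintro m - ⟨ha, hb, hc'⟩
    rw [uniq_line_s11 h34 hb hc' hv1 hv2] at ha
    exact h1c (mem_lk B hu1 ha)
  · rintro m - ⟨ha, hb, hc'⟩
    rw [uniq_line_s11 h34 hb hc' hv1 hv2] at ha
    exact h2c (mem_lk B hu2 ha)

section Pi

variable {P' : Set Point} {L' : Set Line}

/-- Helper: three points of the subplane on a line containing two quad points. -/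
theorem tri2 (hsub : R.IsSubplane P' L') {n : Line} {s t o1 o2 : Point} (hn : n ∈ L')
    (hs : s ∈ P') (ht : t ∈ P') (ho1 : o1 ∈ P') (ho2 : o2 ∈ P')
    (hsn : R.Incid s n) (htn : R.Incid t n) (hst : s ≠ t) (ho12 : o1 ≠ o2)
    (hA : ∀ m ∈ L', ¬(R.Incid s m ∧ R.Incid o1 m ∧ R.Incid o2 m))
    (hB : ∀ m ∈ L', ¬(R.Incid t m ∧ R.Incid o1 m ∧ R.Incid o2 m)) :
    ∃ x1 x2 x3, x1 ∈ P' ∧ x2 ∈ P' ∧ x3 ∈ P' ∧ R.Incid x1 n ∧ R.Incid x2 n ∧ R.Incid x3 n ∧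
      x1 ≠ x2 ∧ x1 ≠ x3 ∧ x2 ≠ x3 := by
  obtain ⟨g, ⟨hgL, ho1g, ho2g⟩, -⟩ := hsub.1 o1 o2 ho1 ho2 ho12
  have hng : n ≠ g := by
    intro h
    rw [h] at hsn
    exact hA g hgL ⟨hsn, ho1g, ho2g⟩
  obtain ⟨e, heP, hen, heg⟩ := hsub.2.1 n g hn hgL hng
  refine ⟨s, t, e, hs, ht, heP, hsn, htn, hen, hst, ?_, ?_⟩
  · intro h
    rw [← h] at heg
    exact hA g hgL ⟨heg, ho1g, ho2g⟩
  · intro h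
    rw [← h] at heg
    exact hB g hgL ⟨heg, ho1g, ho2g⟩

/-- Helper: three points of the subplane on a line avoiding a given triangle. -/
theorem tri3 (hsub : R.IsSubplane P' L') {n : Line} {p1 p2 p3 : Point} (hn : n ∈ L')
    (h1 : p1 ∈ P') (h2 : p2 ∈ P') (h3 : p3 ∈ P')
    (h12 : p1 ≠ p2) (h13 : p1 ≠ p3) (h23 : p2 ≠ p3)
    (hnc : ∀ m ∈ L', ¬(R.Incid p1 m ∧ R.Incid p2 m ∧ R.Incid p3 m))
    (hn1 : ¬R.Incid p1 n) (hn2 : ¬R.Incid p2 n) (hn3 : ¬R.Incid p3 n) :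
    ∃ x1 x2 x3, x1 ∈ P' ∧ x2 ∈ P' ∧ x3 ∈ P' ∧ R.Incid x1 n ∧ R.Incid x2 n ∧ R.Incid x3 n ∧
      x1 ≠ x2 ∧ x1 ≠ x3 ∧ x2 ≠ x3 := by
  obtain ⟨g12, ⟨hg12L, h1g12, h2g12⟩, -⟩ := hsub.1 p1 p2 h1 h2 h12
  obtain ⟨g13, ⟨hg13L, h1g13, h3g13⟩, -⟩ := hsub.1 p1 p3 h1 h3 h13
  obtain ⟨g23, ⟨hg23L, h2g23, h3g23⟩, -⟩ := hsub.1 p2 p3 h2 h3 h23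
  have hng12 : n ≠ g12 := fun h => hn1 (by rw [h]; exact h1g12)
  have hng13 : n ≠ g13 := fun h => hn1 (by rw [h]; exact h1g13)
  have hng23 : n ≠ g23 := fun h => hn2 (by rw [h]; exact h2g23)
  obtain ⟨e12, he12P, he12n, he12g⟩ := hsub.2.1 n g12 hn hg12L hng12
  obtain ⟨e13, he13P, he13n, he13g⟩ := hsub.2.1 n g13 hn hg13L hng13
  obtain ⟨e23, he23P, he23n, he23g⟩ := hsub.2.1 n g23 hn hg23L hng23
  have hgg1 : g12 ≠ g13 := by
    intro h
    exact hnc g12 hg12L ⟨h1g12, h2g12, by rw [h]; exact h3g13⟩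
  have hgg2 : g12 ≠ g23 := by
    intro h
    exact hnc g12 hg12L ⟨h1g12, h2g12, by rw [h]; exact h3g23⟩
  have hgg3 : g13 ≠ g23 := by
    intro h
    exact hnc g13 hg13L ⟨h1g13, by rw [h]; exact h2g23, h3g13⟩
  refine ⟨e12, e13, e23, he12P, he13P, he23P, he12n, he13n, he23n, ?_, ?_, ?_⟩
  · intro h
    have : e12 = p1 := cpt_uniq hgg1 he12g (by rw [h]; exact he13g) h1g12 h1g13
    rw [this] at he12n
    exact hn1 he12n
  · intro h
    have : e12 = p2 := cpt_uniq hgg2 he12g (by rw [h]; exact he23g) h2g12 h2g23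
    rw [this] at he12n
    exact hn2 he12n
  · intro h
    have : e13 = p3 := cpt_uniq hgg3 he13g (by rw [h]; exact he23g) h3g13 h3g23
    rw [this] at he13n
    exact hn3 he13n

/-- Every line of a subplane carries at least three subplane points. -/
theorem pi_three (hsub : R.IsSubplane P' L') {n : Line} (hn : n ∈ L') :
    ∃ x1 x2 x3, x1 ∈ P' ∧ x2 ∈ P' ∧ x3 ∈ P' ∧ R.Incid x1 n ∧ R.Incid x2 n ∧ R.Incid x3 n ∧
      x1 ≠ x2 ∧ x1 ≠ x3 ∧ x2 ≠ x3 := by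
  obtain ⟨a, b, c0, d, haP, hbP, hcP, hdP, hab, hac, had, hbc, hbd, hcd, N1, N2, N3, N4⟩ :=
    hsub.2.2
  by_cases ha : R.Incid a n
  · by_cases hb : R.Incid b n
    · exact tri2 hsub hn haP hbP hcP hdP ha hb hab hcd N3 N4
    · by_cases hc : R.Incid c0 n
      · exact tri2 hsub hn haP hcP hbP hdP ha hc hac hbd N2
          (fun m hm h => N4 m hm ⟨h.2.1, h.1, h.2.2⟩)
      · by_cases hd : R.Incid d n
        · exact tri2 hsub hn haP hdP hbP hcP ha hd had hbc N1
            (fun m hm h => N4 m hm ⟨h.2.1, h.2.2, h.1⟩)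
        · exact tri3 hsub hn hbP hcP hdP hbc hbd hcd N4 hb hc hd
  · by_cases hb : R.Incid b n
    · by_cases hc : R.Incid c0 n
      · exact tri2 hsub hn hbP hcP haP hdP hb hc hbc had
          (fun m hm h => N2 m hm ⟨h.2.1, h.1, h.2.2⟩)
          (fun m hm h => N3 m hm ⟨h.2.1, h.1, h.2.2⟩)
      · by_cases hd : R.Incid d n
        · exact tri2 hsub hn hbP hdP haP hcP hb hd hbd hac
            (fun m hm h => N1 m hm ⟨h.2.1, h.1, h.2.2⟩)
            (fun m hm h => N3 m hm ⟨h.2.1, h.2.2, h.1⟩)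
        · exact tri3 hsub hn haP hcP hdP hac had hcd N3 ha hc hd
    · by_cases hc : R.Incid c0 n
      · by_cases hd : R.Incid d n
        · exact tri2 hsub hn hcP hdP haP hbP hc hd hcd hab
            (fun m hm h => N1 m hm ⟨h.2.1, h.2.2, h.1⟩)
            (fun m hm h => N2 m hm ⟨h.2.1, h.2.2, h.1⟩)
        · exact tri3 hsub hn haP hbP hdP hab had hbd N2 ha hb hd
      · exact tri3 hsub hn haP hbP hcP hab hac hbc N1 ha hb hc

/-- A subplane line distinct from `l` and `k` has a subplane point off both. -/
theorem pi_off (hsub : R.IsSubplane P' L') {n l k : Line} (hn : n ∈ L')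
    (hnl : n ≠ l) (hnk : n ≠ k) :
    ∃ x, x ∈ P' ∧ R.Incid x n ∧ ¬R.Incid x l ∧ ¬R.Incid x k := by
  obtain ⟨x1, x2, x3, h1P, h2P, h3P, h1n, h2n, h3n, h12, h13, h23⟩ := pi_three hsub hn
  have hl2 : ∀ {a b : Point}, a ≠ b → R.Incid a n → R.Incid b n → R.Incid a l →
      ¬R.Incid b l := fun hab ha hb hal hbl => hab (cpt_uniq hnl ha hal hb hbl)
  have hk2 : ∀ {a b : Point}, a ≠ b → R.Incid a n → R.Incid b n → R.Incid a k →
      ¬R.Incid b k := fun hab ha hb hak hbk => hab (cpt_uniq hnk ha hak hb hbk)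
  by_cases h1l : R.Incid x1 l
  · by_cases h2k : R.Incid x2 k
    · exact ⟨x3, h3P, h3n, hl2 h13 h1n h3n h1l, hk2 h23 h2n h3n h2k⟩
    · exact ⟨x2, h2P, h2n, hl2 h12 h1n h2n h1l, h2k⟩
  · by_cases h1k : R.Incid x1 k
    · by_cases h2l : R.Incid x2 l
      · exact ⟨x3, h3P, h3n, hl2 h23 h2n h3n h2l, hk2 h13 h1n h3n h1k⟩
      · exact ⟨x2, h2P, h2n, h2l, hk2 h12 h1n h2n h1k⟩
    · exact ⟨x1, h1P, h1n, h1l, h1k⟩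

/-- Every point of the subplane is a point of the generated full subplane. -/
theorem Psub (hsub : R.IsSubplane P' L') (B : Base R l k c) (hlL : l ∈ L') (hkL : k ∈ L') :
    ∀ z ∈ P', Pf R l k z := by
  intro z hz
  by_cases hzl : R.Incid z l
  · exact Pf_of_l B hzl
  by_cases hzk : R.Incid z k
  · exact Pf_of_k B hzk
  by_cases hzD : z = R.D
  · exact Or.inl hzD
  have H : ∀ u u' : Point, u ∈ P' → u' ∈ P' → R.Incid u l → R.Incid u' l → u ≠ u' →
      u ≠ c → u' ≠ c → Pf R l k z := by
    intro u u' huP hu'P hul hu'l huu' huc hu'c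
    have hzu : z ≠ u := by rintro rfl; exact hzl hul
    have hzu' : z ≠ u' := by rintro rfl; exact hzl hu'l
    obtain ⟨n1, ⟨hn1L, hzn1, hun1⟩, -⟩ := hsub.1 z u hz huP hzu
    obtain ⟨n2, ⟨hn2L, hzn2, hu'n2⟩, -⟩ := hsub.1 z u' hz hu'P hzu'
    have hn1k : n1 ≠ k := by
      intro h
      rw [h] at hzn1
      exact hzk hzn1
    have hn2k : n2 ≠ k := by
      intro h
      rw [h] at hzn2
      exact hzk hzn2
    obtain ⟨v1, hv1P, hv1n1, hv1k⟩ := hsub.2.1 n1 k hn1L hkL hn1k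
    obtain ⟨v2, hv2P, hv2n2, hv2k⟩ := hsub.2.1 n2 k hn2L hkL hn2k
    have hJ1 : Jn R l k n1 := by
      refine ⟨u, v1, hul, hv1k, ?_, hun1, hv1n1⟩
      intro h
      exact huc (mem_lk B hul (by rw [h]; exact hv1k))
    have hJ2 : Jn R l k n2 := by
      refine ⟨u', v2, hu'l, hv2k, ?_, hu'n2, hv2n2⟩
      intro h
      exact hu'c (mem_lk B hu'l (by rw [h]; exact hv2k))
    have hn12 : n1 ≠ n2 := by
      intro h
      have : n1 = l := uniq_line_s11 huu' hun1 (by rw [h]; exact hu'n2) hul hu'l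
      rw [this] at hzn1
      exact hzl hzn1
    by_cases hD1 : R.Incid R.D n1
    · by_cases hD2 : R.Incid R.D n2
      · exact absurd (uniq_line_s11 hzD hzn1 hD1 hzn2 hD2) hn12
      · exact Pf_of_join hJ2 hD2 hzn2
    · exact Pf_of_join hJ1 hD1 hzn1
  obtain ⟨x1, x2, x3, h1P, h2P, h3P, h1l, h2l, h3l, h12, h13, h23⟩ := pi_three hsub hlL
  by_cases e1 : x1 = c
  · refine H x2 x3 h2P h3P h2l h3l h23 ?_ ?_
    · intro h; exact h12 (e1.trans h.symm)
    · intro h; exact h13 (e1.trans h.symm)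
  · by_cases e2 : x2 = c
    · refine H x1 x3 h1P h3P h1l h3l h13 e1 ?_
      intro h; exact h23 (e2.trans h.symm)
    · exact H x1 x2 h1P h2P h1l h2l h12 e1 e2

/-- Every line of the subplane is a line of the generated full subplane. -/
theorem Lsub (hsub : R.IsSubplane P' L') (B : Base R l k c) (hlL : l ∈ L') (hkL : k ∈ L') :
    ∀ n ∈ L', Lf R l k c n := by
  intro n hn
  by_cases hnl : n = l
  · rw [hnl]; exact Or.inl (Jn_l B)
  by_cases hnk : n = k
  · rw [hnk]; exact Or.inl (Jn_k B)
  by_cases hcn : R.Incid c n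
  · obtain ⟨x, hxP, hxn, hxl, hxk⟩ := pi_off hsub hn hnl hnk
    exact Or.inr ⟨hcn, x, Psub hsub B hlL hkL x hxP, hxl, hxk, hxn⟩
  · obtain ⟨u, huP, hun, hul⟩ := hsub.2.1 n l hn hlL hnl
    obtain ⟨v, hvP, hvn, hvk⟩ := hsub.2.1 n k hn hkL hnk
    have huv : u ≠ v := by
      intro h
      rw [mem_lk B hul (by rw [h]; exact hvk)] at hun
      exact hcn hun
    exact Or.inl ⟨u, v, hul, hvk, huv, hun, hvn⟩

end Pi

end PRAux

/-- Every maximal subplane of a projective rectangle is full. -/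
theorem stmt_11 {Point Line : Type} (R : ProjRect Point Line)
    (P' : Set Point) (L' : Set Line) (hsub : R.IsSubplane P' L')
    (hmax : ∀ P'' : Set Point, ∀ L'' : Set Line, R.IsSubplane P'' L'' →
      P' ⊆ P'' → L' ⊆ L'' → P' = P'' ∧ L' = L'') :
    R.IsFull P' L' := by
  intro l hlL hDl p hpl
  classical
  obtain ⟨a, b, c0, d, haP, hbP, hcP, hdP, hab, hac, had, hbc, hbd, hcd, N1, N2, N3, N4⟩ :=
    hsub.2.2
  -- choose a quad point q off l, different from D, plus two companions
  have pick : ∃ q r1 r2 : Point, q ∈ P' ∧ r1 ∈ P' ∧ r2 ∈ P' ∧ ¬R.Incid q l ∧ q ≠ R.D ∧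
      q ≠ r1 ∧ q ≠ r2 ∧
      (∀ m ∈ L', ¬(R.Incid q m ∧ R.Incid r1 m ∧ R.Incid r2 m)) := by
    by_cases hal : R.Incid a l
    · by_cases hbl : R.Incid b l
      · have hc0l : ¬R.Incid c0 l := fun h => N1 l hlL ⟨hal, hbl, h⟩
        have hdl : ¬R.Incid d l := fun h => N2 l hlL ⟨hal, hbl, h⟩
        by_cases hc0D : c0 = R.D
        · refine ⟨d, a, b, hdP, haP, hbP, hdl, ?_, Ne.symm had, Ne.symm hbd,
            fun m hm h => N2 m hm ⟨h.2.1, h.2.2, h.1⟩⟩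
          intro h; exact hcd (hc0D.trans h.symm)
        · exact ⟨c0, a, b, hcP, haP, hbP, hc0l, hc0D, Ne.symm hac, Ne.symm hbc,
            fun m hm h => N1 m hm ⟨h.2.1, h.2.2, h.1⟩⟩
      · by_cases hbD : b = R.D
        · by_cases hc0l : R.Incid c0 l
          · have hdl : ¬R.Incid d l := fun h => N3 l hlL ⟨hal, hc0l, h⟩
            refine ⟨d, a, b, hdP, haP, hbP, hdl, ?_, Ne.symm had, Ne.symm hbd,
              fun m hm h => N2 m hm ⟨h.2.1, h.2.2, h.1⟩⟩
            intro h; exact hbd (hbD.trans h.symm)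
          · have hc0D : c0 ≠ R.D := fun h => hbc (hbD.trans h.symm)
            exact ⟨c0, a, b, hcP, haP, hbP, hc0l, hc0D, Ne.symm hac, Ne.symm hbc,
              fun m hm h => N1 m hm ⟨h.2.1, h.2.2, h.1⟩⟩
        · exact ⟨b, a, c0, hbP, haP, hcP, hbl, hbD, Ne.symm hab, hbc,
            fun m hm h => N1 m hm ⟨h.2.1, h.1, h.2.2⟩⟩
    · by_cases haD : a = R.D
      · by_cases hbl : R.Incid b l
        · by_cases hc0l : R.Incid c0 l
          · have hdl : ¬R.Incid d l := fun h => N4 l hlL ⟨hbl, hc0l, h⟩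
            exact ⟨d, b, c0, hdP, hbP, hcP, hdl, fun h => had (haD.trans h.symm),
              Ne.symm hbd, Ne.symm hcd, fun m hm h => N4 m hm ⟨h.2.1, h.2.2, h.1⟩⟩
          · exact ⟨c0, b, d, hcP, hbP, hdP, hc0l, fun h => hac (haD.trans h.symm),
              Ne.symm hbc, hcd, fun m hm h => N4 m hm ⟨h.2.1, h.1, h.2.2⟩⟩
        · exact ⟨b, c0, d, hbP, hcP, hdP, hbl, fun h => hab (haD.trans h.symm), hbc, hbd,
            fun m hm h => N4 m hm h⟩
      · exact ⟨a, b, c0, haP, hbP, hcP, hal, haD, hab, hac, fun m hm h => N1 m hm h⟩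
  obtain ⟨q, r1, r2, hqP, hr1P, hr2P, hql, hqD, hqr1, hqr2, hNC⟩ := pick
  obtain ⟨m1, ⟨hm1L, hqm1, hr1m1⟩, -⟩ := hsub.1 q r1 hqP hr1P hqr1
  obtain ⟨m2, ⟨hm2L, hqm2, hr2m2⟩, -⟩ := hsub.1 q r2 hqP hr2P hqr2
  have hm12 : m1 ≠ m2 := fun h => hNC m1 hm1L ⟨hqm1, hr1m1, by rw [h]; exact hr2m2⟩
  have hk : ∃ kk, kk ∈ L' ∧ ¬R.Incid R.D kk ∧ R.Incid q kk := by
    by_cases h1 : R.Incid R.D m1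
    · by_cases h2 : R.Incid R.D m2
      · exact absurd (PRAux.uniq_line_s11 hqD hqm1 h1 hqm2 h2) hm12
      · exact ⟨m2, hm2L, h2, hqm2⟩
    · exact ⟨m1, hm1L, h1, hqm1⟩
  obtain ⟨k, hkL, hDk, hqk⟩ := hk
  have hlk : l ≠ k := fun h => hql (by rw [h]; exact hqk)
  obtain ⟨c, hcP, hcl, hck⟩ := hsub.2.1 l k hlL hkL hlk
  have B : PRAux.Base R l k c := ⟨hDl, hDk, hlk, hcl, hck⟩
  obtain ⟨hPeq, -⟩ := hmax {x | PRAux.Pf R l k x} {n | PRAux.Lf R l k c n}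
    (PRAux.F_sub B) (fun z hz => PRAux.Psub hsub B hlL hkL z hz)
    (fun n hn => PRAux.Lsub hsub B hlL hkL n hn)
  rw [hPeq]
  exact PRAux.Pf_of_l B hpl
end
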